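/- arXiv:2007.13710 — 10 statements merged into one kernel-verified Lean document; each statement's English description precedes it below -/
import Mathlib

section
/- Let M = (G, F) be a mixed 2-edge-coloured graph on a finite vertex set V with n ≥ 1 vertices. Then there exists a polynomial P with rational coefficients such that P(k) equals the number of k-colourings of M for every natural number k; moreover P has degree n, its leading coefficient is 1, and its constant term is 0. -/
open SimpleGraph Polynomial

/-- A `k`-colouring of a mixed 2-edge-coloured graph with red edge graph `R`,
blue edge graph `B`, and extra uncoloured edge graph `F`. -/
def IsMixedColouring {V : Type*} (R B F : SimpleGraph V) {k : ℕ} (c : V → Fin k) : Prop :=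
  (∀ u v, (R ⊔ B ⊔ F).Adj u v → c u ≠ c v) ∧
  (∀ u x v y, R.Adj u x → B.Adj v y → c u = c v → c x ≠ c y)

/-- The number of `k`-colourings of the mixed 2-edge-coloured graph `(R, B, F)`. -/
noncomputable def numColourings {V : Type*} (R B F : SimpleGraph V) (k : ℕ) : ℕ :=
  Nat.card {c : V → Fin k // IsMixedColouring R B F c}

/-- A bichromatic 2-path `(x, u, y)`: `xu` red, `uy` blue, `xy` not an edge of `S(M)`. -/
def IsBiPath {V : Type*} (R B F : SimpleGraph V) (x u y : V) : Prop :=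
  R.Adj x u ∧ B.Adj u y ∧ ¬(R ⊔ B ⊔ F).Adj x y

/-- The number of bichromatic 2-paths. -/
noncomputable def numBiPaths {V : Type*} (R B F : SimpleGraph V) : ℕ :=
  Nat.card {p : V × V × V // IsBiPath R B F p.1 p.2.1 p.2.2}

/-- The graph `Λ(M)`: all edges of `S(M)` plus edges joining the ends of
bichromatic 2-paths. -/
def LambdaGraph {V : Type*} (R B F : SimpleGraph V) : SimpleGraph V where
  Adj a b := a ≠ b ∧ ((R ⊔ B ⊔ F).Adj a b ∨
    ∃ w, IsBiPath R B F a w b ∨ IsBiPath R B F b w a)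
  symm := ⟨by
    rintro a b ⟨hab, h⟩
    refine ⟨hab.symm, ?_⟩
    rcases h with h | ⟨w, h⟩
    · exact Or.inl h.symm
    · exact Or.inr ⟨w, h.symm⟩⟩
  loopless := ⟨fun a h => h.1 rfl⟩

/-- `(p.1, p.2)` is a pair of obstructing edges: `p.1` a red edge `ux`, `p.2` a blue edge
`vy`, with the subgraph of `Λ` induced on `{u, x, v, y}` of chromatic number 2. -/
def IsObstructingPair {V : Type*} (R B F : SimpleGraph V) (p : Sym2 V × Sym2 V) : Prop :=
  ∃ u x v y : V, p.1 = s(u, x) ∧ p.2 = s(v, y) ∧ R.Adj u x ∧ B.Adj v y ∧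
    (SimpleGraph.induce {u, x, v, y} (LambdaGraph R B F)).chromaticNumber = 2

/-- The number of pairs of obstructing edges. -/
noncomputable def numObstructing {V : Type*} (R B F : SimpleGraph V) : ℕ :=
  Nat.card {p : Sym2 V × Sym2 V // IsObstructingPair R B F p}

/-- The number of 3-element vertex subsets inducing a triangle. -/
noncomputable def numTriangles {V : Type*} (G : SimpleGraph V) : ℕ :=
  Nat.card {s : Finset V // s.card = 3 ∧ ∀ a ∈ s, ∀ b ∈ s, a ≠ b → G.Adj a b}

/-- A 2-edge-coloured graph is chromatically invariant when for each `k` its number of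
`k`-colourings equals the number of proper `k`-colourings of the underlying graph. -/
def ChromaticallyInvariant {V : Type*} (R B : SimpleGraph V) : Prop :=
  ∀ k : ℕ, Nat.card {c : V → Fin k // IsMixedColouring R B ⊥ c} =
    Nat.card {c : V → Fin k // ∀ u v, (R ⊔ B).Adj u v → c u ≠ c v}

/-- A graph is a join when its vertex set has a partition into two non-empty parts with
every vertex of one part adjacent to every vertex of the other. -/
def IsJoin {W : Type*} (G : SimpleGraph W) : Prop :=
  ∃ X Y : Set W, X.Nonempty ∧ Y.Nonempty ∧ Disjoint X Y ∧ X ∪ Y = Set.univ ∧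
    ∀ x ∈ X, ∀ y ∈ Y, G.Adj x y

/-- Disjoint union of two simple graphs. -/
def disjUnion {α β : Type*} (G : SimpleGraph α) (H : SimpleGraph β) :
    SimpleGraph (α ⊕ β) where
  Adj a b := match a, b with
    | Sum.inl a, Sum.inl b => G.Adj a b
    | Sum.inr a, Sum.inr b => H.Adj a b
    | _, _ => False
  symm := ⟨by rintro (a | a) (b | b) h <;> simp_all <;> exact h.symm⟩
  loopless := ⟨by rintro (a | a) h <;> exact (SimpleGraph.irrefl _) h⟩

/-- The complete bipartite "cross" graph between the two sides of a sum type. -/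
def crossGraph (α β : Type*) : SimpleGraph (α ⊕ β) where
  Adj a b := match a, b with
    | Sum.inl _, Sum.inr _ => True
    | Sum.inr _, Sum.inl _ => True
    | _, _ => False
  symm := ⟨by rintro (a | a) (b | b) h <;> trivial⟩
  loopless := ⟨by rintro (a | a) h <;> exact h⟩
section ChromAux

variable {V : Type*}

/-- Validity of a setoid as the kernel of a mixed colouring. -/
def MixedValid (R B F : SimpleGraph V) (s : Setoid V) : Prop :=
  (∀ u v, (R ⊔ B ⊔ F).Adj u v → ¬ s u v) ∧
  (∀ u x v y, R.Adj u x → B.Adj v y → s u v → ¬ s x y)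

lemma isMixedColouring_iff_ker (R B F : SimpleGraph V) {k : ℕ} (c : V → Fin k) :
    IsMixedColouring R B F c ↔ MixedValid R B F (Setoid.ker c) :=
  Iff.rfl

/-- Colourings with a given kernel correspond to injections from the quotient. -/
noncomputable def kerFiberEquiv (s : Setoid V) (k : ℕ) :
    {c : V → Fin k // Setoid.ker c = s} ≃
      {g : Quotient s → Fin k // Function.Injective g} where
  toFun c := ⟨Quotient.lift c.1 (fun a b hab => by
      have := c.2 ▸ hab; exact this),
    fun qa qb => Quotient.inductionOn₂ qa qb fun a b h => by
      refine Quotient.sound ?_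
      have : Setoid.ker c.1 a b := h
      exact c.2 ▸ this⟩
  invFun g := ⟨g.1 ∘ Quotient.mk s, by
    ext a b
    exact ⟨fun h => Quotient.exact (g.2 h), fun h => congrArg g.1 (Quotient.sound h)⟩⟩
  left_inv c := Subtype.ext (funext fun a => rfl)
  right_inv g := Subtype.ext (funext fun q => Quotient.inductionOn q fun a => rfl)

variable [Fintype V]

noncomputable instance : Fintype (Setoid V) := by
  classical
  exact Fintype.ofInjective (fun s : Setoid V => ⇑s)
    fun s t h => Setoid.ext fun a b => iff_of_eq (congrFun (congrFun h a) b)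

noncomputable instance (R B F : SimpleGraph V) :
    Fintype {s : Setoid V // MixedValid R B F s} := by
  classical infer_instance

noncomputable instance (s : Setoid V) : Fintype (Quotient s) :=
  @Quotient.fintype _ _ s fun _ _ => Classical.dec _

lemma numColourings_eq_sum (R B F : SimpleGraph V) (k : ℕ) :
    numColourings R B F k =
      ∑ s : {s : Setoid V // MixedValid R B F s},
        k.descFactorial (Fintype.card (Quotient s.1)) := by
  classical
  rw [numColourings, Nat.card_eq_fintype_card]
  have e1 : {c : V → Fin k // IsMixedColouring R B F c} ≃
      {c : V → Fin k // MixedValid R B F (Setoid.ker c)} :=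
    Equiv.subtypeEquivRight fun c => isMixedColouring_iff_ker R B F c
  let f : {c : V → Fin k // MixedValid R B F (Setoid.ker c)} →
      {s : Setoid V // MixedValid R B F s} := fun c => ⟨Setoid.ker c.1, c.2⟩
  have e2 := (Equiv.sigmaFiberEquiv f).symm
  rw [Fintype.card_congr (e1.trans e2), Fintype.card_sigma]
  refine Finset.sum_congr rfl fun s _ => ?_
  have e3 : {c' : {c : V → Fin k // MixedValid R B F (Setoid.ker c)} // f c' = s} ≃
      {c : V → Fin k // Setoid.ker c = s.1} :=
    { toFun := fun c => ⟨c.1.1, congrArg Subtype.val c.2⟩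
      invFun := fun c => ⟨⟨c.1, by rw [c.2]; exact s.2⟩, Subtype.ext c.2⟩
      left_inv := fun c => Subtype.ext (Subtype.ext rfl)
      right_inv := fun c => Subtype.ext rfl }
  rw [Fintype.card_congr ((e3.trans (kerFiberEquiv s.1 k)).trans
    (Equiv.subtypeInjectiveEquivEmbedding _ _)), Fintype.card_embedding_eq,
    Fintype.card_fin]

end ChromAux

/-- The chromatic polynomial of a mixed 2-edge-coloured graph on `n ≥ 1` vertices exists,
is monic of degree `n`, and has zero constant term. -/
theorem chromatic_polynomial_exists_monic_degree
    {V : Type*} [Fintype V] (R B F : SimpleGraph V)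
    (hRB : Disjoint R B) (hF : Disjoint (R ⊔ B) F)
    (hn : 1 ≤ Fintype.card V) :
    ∃ P : Polynomial ℚ,
      (∀ k : ℕ, P.eval (k : ℚ) = numColourings R B F k) ∧
      P.degree = Fintype.card V ∧ P.leadingCoeff = 1 ∧ P.coeff 0 = 0 := by
  classical
  set n := Fintype.card V with hn'
  let eqS : Setoid V := ⟨Eq, eq_equivalence⟩
  have heqValid : MixedValid R B F eqS := by
    constructor
    · intro u v hadj h
      exact hadj.ne h
    · intro u x v y hr hb huv hxy
      have h1 : u = v := huv
      have h2 : x = y := hxy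
      subst h1; subst h2
      exact (hRB.le_bot ⟨hr, hb⟩ : (⊥ : SimpleGraph V).Adj u x)
  have hcard_eq : Fintype.card (Quotient eqS) = n :=
    (Fintype.card_congr (Equiv.ofBijective (Quotient.mk eqS)
      ⟨fun a b h => Quotient.exact h, fun q => ⟨q.out, q.out_eq⟩⟩)).symm
  have huniq : ∀ s : Setoid V, Fintype.card (Quotient s) = n → s = eqS := by
    intro s hs
    have hb : Function.Bijective (Quotient.mk s) :=
      (Fintype.bijective_iff_surjective_and_card _).mpr
        ⟨fun q => ⟨q.out, q.out_eq⟩, hs.symm⟩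
    ext a b
    exact ⟨fun h => hb.1 (Quotient.sound h), fun h => h ▸ s.refl' a⟩
  let s₀ : {s : Setoid V // MixedValid R B F s} := ⟨eqS, heqValid⟩
  let q : {s : Setoid V // MixedValid R B F s} → ℕ := fun s => Fintype.card (Quotient s.1)
  have hq0 : q s₀ = n := hcard_eq
  have hdn : (descPochhammer ℚ n).degree = (n : WithBot ℕ) := by
    rw [Polynomial.degree_eq_natDegree (monic_descPochhammer ℚ n).ne_zero,
      descPochhammer_natDegree]
  have hsplit : (∑ s : {s : Setoid V // MixedValid R B F s}, descPochhammer ℚ (q s)) =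
      descPochhammer ℚ n +
        ∑ s ∈ Finset.univ.erase s₀, descPochhammer ℚ (q s) := by
    rw [← Finset.add_sum_erase _ _ (Finset.mem_univ s₀), hq0]
  have hQlt : (∑ s ∈ Finset.univ.erase s₀, descPochhammer ℚ (q s)).degree <
      (descPochhammer ℚ n).degree := by
    refine lt_of_le_of_lt (Polynomial.degree_sum_le _ _) ?_
    rw [hdn]
    refine (Finset.sup_lt_iff (WithBot.bot_lt_coe n)).mpr fun s hs => ?_
    have h1 : q s ≤ n := Fintype.card_le_of_surjective _ fun qq => ⟨qq.out, qq.out_eq⟩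
    have h2 : q s ≠ n := fun h =>
      Finset.ne_of_mem_erase hs (Subtype.ext (huniq s.1 h))
    have hds : (descPochhammer ℚ (q s)).degree = (q s : WithBot ℕ) := by
      rw [Polynomial.degree_eq_natDegree (monic_descPochhammer ℚ (q s)).ne_zero,
        descPochhammer_natDegree]
    rw [hds]
    exact WithBot.coe_lt_coe.mpr (lt_of_le_of_ne h1 h2)
  refine ⟨∑ s : {s : Setoid V // MixedValid R B F s}, descPochhammer ℚ (q s), ?_, ?_, ?_, ?_⟩
  · intro k
    rw [numColourings_eq_sum, Nat.cast_sum, Polynomial.eval_finset_sum]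
    exact Finset.sum_congr rfl fun s _ =>
      descPochhammer_eval_eq_descFactorial ℚ k (q s)
  · rw [hsplit, Polynomial.degree_add_eq_left_of_degree_lt hQlt, hdn]
  · rw [hsplit]
    exact ((monic_descPochhammer ℚ n).add_of_left hQlt).leadingCoeff
  · rw [Polynomial.coeff_zero_eq_eval_zero, Polynomial.eval_finset_sum]
    refine Finset.sum_eq_zero fun s _ => ?_
    have hne : Nonempty V := Fintype.card_pos_iff.mp hn
    have hpos : 0 < q s := Fintype.card_pos_iff.mpr ⟨Quotient.mk s.1 hne.some⟩
    rw [descPochhammer_eval_zero, if_neg (Nat.pos_iff_ne_zero.mp hpos)]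
end

section
/- Let G = (Γ, R, B) be a 2-edge-coloured graph with no bichromatic 2-path and no pair of obstructing edges (that is, 𝒫_G = ∅ and 𝒪_G = ∅). Then G is chromatically invariant. -/
open SimpleGraph Polynomial

private lemma chromaticNumber_eq_two_of_adj_of_coloring {W : Type*} (G : SimpleGraph W)
    {a b : W} (h : G.Adj a b) (C : G.Coloring (Fin 2)) : G.chromaticNumber = 2 := by
  have h1 : G.chromaticNumber ≤ 2 := by
    simpa using C.colorable.chromaticNumber_le
  have h2 : (2 : ℕ∞) ≤ G.chromaticNumber := by
    by_contra hc
    push_neg at hc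
    have : G.chromaticNumber ≤ 1 := by simpa using hc
    rw [show ((1:ℕ∞)) = ((1:ℕ):ℕ∞) by norm_num,
      SimpleGraph.chromaticNumber_le_iff_colorable] at this
    obtain ⟨C1⟩ := this
    exact C1.valid h (Subsingleton.elim _ _)
  exact le_antisymm h1 h2

/-- A 2-edge-coloured graph with no bichromatic 2-path and no pair of obstructing edges
is chromatically invariant. -/
theorem chromaticallyInvariant_of_no_biPath_of_no_obstructing
    {V : Type*} [Fintype V] (R B : SimpleGraph V) (hRB : Disjoint R B)
    (hP : ∀ x u y : V, ¬ IsBiPath R B ⊥ x u y)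
    (hO : ∀ p : Sym2 V × Sym2 V, ¬ IsObstructingPair R B ⊥ p) :
    ChromaticallyInvariant R B := by
  intro k
  apply Nat.card_congr
  apply Equiv.subtypeEquivRight
  intro c
  constructor
  · rintro ⟨h1, _⟩ u v huv
    exact h1 u v (by simpa using huv)
  · intro h
    have hLam : ∀ a b, (LambdaGraph R B ⊥).Adj a b → (R ⊔ B).Adj a b := by
      rintro a b ⟨hne, hadj | ⟨w, hp | hp⟩⟩
      · simpa using hadj
      · exact absurd hp (hP _ _ _)
      · exact absurd hp (hP _ _ _)
    refine ⟨fun u v huv => h u v (by simpa using huv), ?_⟩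
    intro u x v y hr hb huv hxy
    by_cases huveq : u = v
    · subst huveq
      have hadj : (R ⊔ B ⊔ ⊥).Adj x y := by
        by_contra hne
        exact hP x u y ⟨hr.symm, hb, hne⟩
      exact h x y (by simpa using hadj) hxy
    · -- build an obstructing pair
      have hux : c u ≠ c x := h u x (Or.inl hr)
      refine hO (s(u, x), s(v, y)) ⟨u, x, v, y, rfl, rfl, hr, hb, ?_⟩
      set S : Set V := {u, x, v, y} with hS
      have hu : u ∈ S := by simp [hS]
      have hx : x ∈ S := by simp [hS]
      have C : (SimpleGraph.induce S (LambdaGraph R B ⊥)).Coloring (Fin 2) := by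
        refine SimpleGraph.Coloring.mk
          (fun w => if c w.1 = c u then 0 else 1) ?_
        intro a b hab
        have hadj : (R ⊔ B).Adj a.1 b.1 := hLam _ _ hab
        have hcab : c a.1 ≠ c b.1 := h _ _ hadj
        have key : ∀ w : S, c w.1 = c u ∨ c w.1 = c x := by
          rintro ⟨w, hw⟩
          rcases hw with rfl | rfl | rfl | rfl
          · exact Or.inl rfl
          · exact Or.inr rfl
          · exact Or.inl huv.symm
          · exact Or.inr hxy.symm
        by_cases ha : c a.1 = c u <;> by_cases hb' : c b.1 = c u <;>
          simp only [ha, hb', if_true, if_false]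
        · exact absurd (ha.trans hb'.symm) hcab
        · exact (by decide : (0 : Fin 2) ≠ 1)
        · exact (by decide : (1 : Fin 2) ≠ 0)
        · rcases key a with h1 | h1
          · exact absurd h1 ha
          · rcases key b with h2 | h2
            · exact absurd h2 hb'
            · exact absurd (h1.trans h2.symm) hcab
      have hedge : (SimpleGraph.induce S (LambdaGraph R B ⊥)).Adj ⟨u, hu⟩ ⟨x, hx⟩ :=
        ⟨hr.ne, Or.inl (by simp [hr])⟩
      exact chromaticNumber_eq_two_of_adj_of_coloring _ hedge C
end

section
/- A 2-edge-coloured graph G = (Γ, R, B) is chromatically invariant if and only if for every pair of disjoint non-empty independent sets I₁ and I₂ of Γ, the set of edges of Γ with both ends in I₁ ∪ I₂ is entirely contained in R or entirely contained in B. -/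
open SimpleGraph Polynomial

/-- A 2-edge-coloured graph is chromatically invariant iff for every pair of disjoint
non-empty independent sets `I₁`, `I₂` of the underlying graph, the edges with both ends
in `I₁ ∪ I₂` all lie in `R` or all lie in `B`. -/
theorem chromaticallyInvariant_iff_independent_pairs_monochromatic
    {V : Type*} [Fintype V] (R B : SimpleGraph V) (hRB : Disjoint R B) :
    ChromaticallyInvariant R B ↔
      ∀ I₁ I₂ : Set V, I₁.Nonempty → I₂.Nonempty → Disjoint I₁ I₂ →
        (∀ a ∈ I₁, ∀ b ∈ I₁, ¬(R ⊔ B).Adj a b) →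
        (∀ a ∈ I₂, ∀ b ∈ I₂, ¬(R ⊔ B).Adj a b) →
        ((∀ a b : V, a ∈ I₁ ∪ I₂ → b ∈ I₁ ∪ I₂ → (R ⊔ B).Adj a b → R.Adj a b) ∨
         (∀ a b : V, a ∈ I₁ ∪ I₂ → b ∈ I₁ ∪ I₂ → (R ⊔ B).Adj a b → B.Adj a b)) := by

  classical
  constructor
  · -- Chromatically invariant implies the monochromatic condition
    intro hCI I₁ I₂ h1 h2 hdisj hind1 hind2
    by_contra hcon
    push_neg at hcon
    obtain ⟨⟨b₁, b₂, hb₁, hb₂, hbAdj, hbNotR⟩, ⟨r₁, r₂, hr₁, hr₂, hrAdj, hrNotB⟩⟩ := hcon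
    have hblue : B.Adj b₁ b₂ := ((SimpleGraph.sup_adj _ _ _ _).mp hbAdj).resolve_left hbNotR
    have hred : R.Adj r₁ r₂ := ((SimpleGraph.sup_adj _ _ _ _).mp hrAdj).resolve_right hrNotB
    have split : ∀ a b : V, a ∈ I₁ ∪ I₂ → b ∈ I₁ ∪ I₂ → (R ⊔ B).Adj a b →
        (a ∈ I₁ ∧ b ∈ I₂) ∨ (a ∈ I₂ ∧ b ∈ I₁) := by
      intro a b ha hb hab
      rcases ha with ha | ha <;> rcases hb with hb | hb
      · exact absurd hab (hind1 a ha b hb)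
      · exact Or.inl ⟨ha, hb⟩
      · exact Or.inr ⟨ha, hb⟩
      · exact absurd hab (hind2 a ha b hb)
    obtain ⟨u, x, hu, hx, hux⟩ : ∃ u x, u ∈ I₁ ∧ x ∈ I₂ ∧ R.Adj u x := by
      rcases split r₁ r₂ hr₁ hr₂ hrAdj with ⟨h, h'⟩ | ⟨h, h'⟩
      · exact ⟨r₁, r₂, h, h', hred⟩
      · exact ⟨r₂, r₁, h', h, hred.symm⟩
    obtain ⟨v, y, hv, hy, hvy⟩ : ∃ v y, v ∈ I₁ ∧ y ∈ I₂ ∧ B.Adj v y := by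
      rcases split b₁ b₂ hb₁ hb₂ hbAdj with ⟨h, h'⟩ | ⟨h, h'⟩
      · exact ⟨b₁, b₂, h, h', hblue⟩
      · exact ⟨b₂, b₁, h', h, hblue.symm⟩
    set k := Fintype.card V + 2 with hk
    let e := Fintype.equivFin V
    let c : V → Fin k := fun w =>
      if w ∈ I₁ then ⟨0, by omega⟩ else if w ∈ I₂ then ⟨1, by omega⟩
      else ⟨(e w).val + 2, by have := (e w).isLt; omega⟩
    have val1 : ∀ w ∈ I₁, (c w).val = 0 := by intro w hw; simp [c, hw]
    have val2 : ∀ w ∈ I₂, (c w).val = 1 := by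
      intro w hw
      have hw1 : w ∉ I₁ := fun h => (Set.disjoint_left.mp hdisj h) hw
      simp [c, hw, hw1]; exact Nat.mod_eq_of_lt (by omega)
    have val3 : ∀ w, w ∉ I₁ → w ∉ I₂ → (c w).val = (e w).val + 2 := by
      intro w hw1 hw2; simp [c, hw1, hw2]
    have hproper : ∀ a b, (R ⊔ B).Adj a b → c a ≠ c b := by
      intro a b hab hc
      have hcv : (c a).val = (c b).val := congrArg Fin.val hc
      by_cases ha1 : a ∈ I₁
      · by_cases hb1 : b ∈ I₁
        · exact hind1 a ha1 b hb1 hab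
        · by_cases hb2 : b ∈ I₂
          · rw [val1 a ha1, val2 b hb2] at hcv; omega
          · rw [val1 a ha1, val3 b hb1 hb2] at hcv; omega
      · by_cases ha2 : a ∈ I₂
        · by_cases hb1 : b ∈ I₁
          · rw [val2 a ha2, val1 b hb1] at hcv; omega
          · by_cases hb2 : b ∈ I₂
            · exact hind2 a ha2 b hb2 hab
            · rw [val2 a ha2, val3 b hb1 hb2] at hcv; omega
        · by_cases hb1 : b ∈ I₁
          · rw [val3 a ha1 ha2, val1 b hb1] at hcv; omega
          · by_cases hb2 : b ∈ I₂
            · rw [val3 a ha1 ha2, val2 b hb2] at hcv; omega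
            · rw [val3 a ha1 ha2, val3 b hb1 hb2] at hcv
              have heab : e a = e b := Fin.val_injective (by omega)
              exact hab.ne (e.injective heab)
    have hnotmixed : ¬ IsMixedColouring R B ⊥ c := by
      intro hmix
      have h1 : c u = c v := Fin.val_injective (by rw [val1 u hu, val1 v hv])
      have h2 : c x = c y := Fin.val_injective (by rw [val2 x hx, val2 y hy])
      exact hmix.2 u x v y hux hvy h1 h2
    have hsub : {d : V → Fin k | IsMixedColouring R B ⊥ d} ⊂
        {d : V → Fin k | ∀ a b, (R ⊔ B).Adj a b → d a ≠ d b} := by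
      constructor
      · intro d hd a b hab
        exact hd.1 a b ((SimpleGraph.sup_adj _ _ _ _).mpr (Or.inl hab))
      · intro hss
        exact hnotmixed (hss hproper)
    have hlt := Set.ncard_lt_ncard hsub (Set.toFinite _)
    have heq := hCI k
    have e1 : Nat.card {d : V → Fin k // IsMixedColouring R B ⊥ d} =
        Set.ncard {d : V → Fin k | IsMixedColouring R B ⊥ d} :=
      Nat.card_coe_set_eq _
    have e2 : Nat.card {d : V → Fin k // ∀ a b, (R ⊔ B).Adj a b → d a ≠ d b} =
        Set.ncard {d : V → Fin k | ∀ a b, (R ⊔ B).Adj a b → d a ≠ d b} :=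
      Nat.card_coe_set_eq _
    rw [e1, e2] at heq
    exact absurd heq (Nat.ne_of_lt hlt)
  · -- The monochromatic condition implies chromatic invariance
    intro hcond k
    refine Nat.card_congr (Equiv.subtypeEquivRight fun c => ⟨?_, ?_⟩)
    · intro h a b hab
      exact h.1 a b ((SimpleGraph.sup_adj _ _ _ _).mpr (Or.inl hab))
    · intro h
      constructor
      · intro a b hab
        rcases (SimpleGraph.sup_adj _ _ _ _).mp hab with h' | h'
        · exact h a b h'
        · exact absurd h' (by simp)
      · intro u x v y hr hb hcuv hcxy
        have hne_ux : c u ≠ c x := h u x ((SimpleGraph.sup_adj _ _ _ _).mpr (Or.inl hr))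
        have hval1 : ∀ a ∈ ({u, v} : Set V), c a = c u := by
          rintro a (rfl | rfl)
          · rfl
          · exact hcuv.symm
        have hval2 : ∀ a ∈ ({x, y} : Set V), c a = c x := by
          rintro a (rfl | rfl)
          · rfl
          · exact hcxy.symm
        have hdisj : Disjoint ({u, v} : Set V) ({x, y} : Set V) := by
          rw [Set.disjoint_left]
          intro a ha ha'
          exact hne_ux ((hval1 a ha).symm.trans (hval2 a ha'))
        have hind1 : ∀ a ∈ ({u, v} : Set V), ∀ b ∈ ({u, v} : Set V),
            ¬(R ⊔ B).Adj a b := by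
          intro a ha b hb hab
          exact h a b hab ((hval1 a ha).trans (hval1 b hb).symm)
        have hind2 : ∀ a ∈ ({x, y} : Set V), ∀ b ∈ ({x, y} : Set V),
            ¬(R ⊔ B).Adj a b := by
          intro a ha b hb hab
          exact h a b hab ((hval2 a ha).trans (hval2 b hb).symm)
        rcases hcond {u, v} {x, y} ⟨u, by simp⟩ ⟨x, by simp⟩ hdisj hind1 hind2 with
          hm | hm
        · have hry : R.Adj v y := hm v y (by simp) (by simp)
            ((SimpleGraph.sup_adj _ _ _ _).mpr (Or.inr hb))
          have : (R ⊓ B).Adj v y := ⟨hry, hb⟩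
          rw [hRB.eq_bot] at this
          exact this
        · have hbx : B.Adj u x := hm u x (by simp) (by simp)
            ((SimpleGraph.sup_adj _ _ _ _).mpr (Or.inl hr))
          have : (R ⊓ B).Adj u x := ⟨hr, hbx⟩
          rw [hRB.eq_bot] at this
          exact this
end

section
/- If G = (Γ, R, B) is a chromatically invariant 2-edge-coloured graph, then for every subset W of the vertex set V, the induced 2-edge-coloured subgraph G[W] (whose underlying graph is the subgraph of Γ induced on W, with each edge keeping its colour from R or B) is chromatically invariant. -/
open SimpleGraph Polynomial

lemma key_mixed {V : Type*} [Fintype V] (R B : SimpleGraph V)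
    (h : ChromaticallyInvariant R B) (k : ℕ) (c : V → Fin k)
    (hc : ∀ u v, (R ⊔ B).Adj u v → c u ≠ c v) : IsMixedColouring R B ⊥ c := by
  classical
  set M : Set (V → Fin k) := {c | IsMixedColouring R B ⊥ c} with hM
  set P : Set (V → Fin k) := {c | ∀ u v, (R ⊔ B).Adj u v → c u ≠ c v} with hP
  have hsub : M ⊆ P := by
    intro d hd u v huv
    exact hd.1 u v (by simpa using huv)
  have hcard : M.ncard = P.ncard := by
    rw [← Nat.card_coe_set_eq, ← Nat.card_coe_set_eq]
    exact h k
  have hMP : M = P :=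
    Set.eq_of_subset_of_ncard_le hsub (le_of_eq hcard.symm) (Set.toFinite P)
  have : c ∈ M := hMP ▸ hc
  exact this

/-- Every induced subgraph of a chromatically invariant 2-edge-coloured graph is
chromatically invariant. -/
theorem chromaticallyInvariant_induce
    {V : Type*} [Fintype V] (R B : SimpleGraph V) (hRB : Disjoint R B)
    (h : ChromaticallyInvariant R B) (W : Set V) :
    ChromaticallyInvariant (SimpleGraph.induce W R) (SimpleGraph.induce W B) := by
  classical
  intro k
  -- It suffices to show every proper colouring of the induced graph is mixed.
  have main : ∀ c : W → Fin k,
      (∀ u v, (SimpleGraph.induce W R ⊔ SimpleGraph.induce W B).Adj u v → c u ≠ c v) →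
      IsMixedColouring (SimpleGraph.induce W R) (SimpleGraph.induce W B) ⊥ c := by
    intro c hc
    set n := Fintype.card V with hn
    set e := Fintype.equivFin V with he
    set C : V → Fin (k + n) := fun v =>
      if hv : v ∈ W then Fin.castAdd n (c ⟨v, hv⟩) else Fin.natAdd k (e v) with hC
    have hCW : ∀ (v : V) (hv : v ∈ W), C v = Fin.castAdd n (c ⟨v, hv⟩) := by
      intro v hv; simp [hC, hv]
    have hCproper : ∀ u v, (R ⊔ B).Adj u v → C u ≠ C v := by
      intro u v huv hne
      have hne' : u ≠ v := by
        rintro rfl; exact (R ⊔ B).irrefl huv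
      by_cases hu : u ∈ W <;> by_cases hv : v ∈ W
      · rw [hCW u hu, hCW v hv] at hne
        have : c ⟨u, hu⟩ = c ⟨v, hv⟩ := by
          apply Fin.castAdd_injective k n hne
        refine hc ⟨u, hu⟩ ⟨v, hv⟩ ?_ this
        rcases huv with h' | h'
        · exact Or.inl h'
        · exact Or.inr h'
      · rw [hCW u hu] at hne
        simp only [hC, hv, dif_neg, not_false_iff] at hne
        have := congrArg Fin.val hne
        simp [Fin.castAdd, Fin.natAdd] at this
        omega
      · rw [hCW v hv] at hne
        simp only [hC, hu, dif_neg, not_false_iff] at hne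
        have := congrArg Fin.val hne
        simp [Fin.castAdd, Fin.natAdd] at this
        omega
      · simp only [hC, hu, hv, dif_neg, not_false_iff] at hne
        have : e u = e v := by
          have := congrArg Fin.val hne
          simp [Fin.natAdd] at this
          exact Fin.ext this
        exact hne' (e.injective this)
    have hCmixed := key_mixed R B h (k + n) C hCproper
    constructor
    · intro u v huv
      refine hc u v ?_
      simpa using huv
    · rintro u x v y hux hvy hcuv
      have hux' : R.Adj ↑u ↑x := hux
      have hvy' : B.Adj ↑v ↑y := hvy
      have hCuv : C ↑u = C ↑v := by
        rw [hCW _ u.2, hCW _ v.2]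
        exact congrArg (Fin.castAdd n) (by simpa using hcuv)
      have := hCmixed.2 ↑u ↑x ↑v ↑y hux' hvy' hCuv
      intro hxy
      apply this
      rw [hCW _ x.2, hCW _ y.2]
      exact congrArg (Fin.castAdd n) (by simpa using hxy)
  -- conclude cardinalities are equal
  apply Nat.card_congr
  apply Equiv.subtypeEquivRight
  intro c
  constructor
  · intro hm u v huv
    exact hm.1 u v (by simpa using huv)
  · exact main c
end

section
/- Let Γ be a simple graph on a finite vertex set V, and suppose V admits a partition into two non-empty sets X and Y such that every vertex of X is adjacent in Γ to every vertex of Y, every vertex of X has a neighbour in X, and every vertex of Y has a neighbour in Y. Then Γ admits a 2-edge-colouring (R, B) with R ≠ ∅ and B ≠ ∅ such that the resulting 2-edge-coloured graph G = (Γ, R, B) is chromatically invariant and every vertex of V is incident with at least one red edge and at least one blue edge. -/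
open SimpleGraph Polynomial

/-- A join of two graphs with no isolated vertices admits a non-trivial chromatically
invariant 2-edge-colouring in which every vertex is incident with a red and a blue edge. -/
theorem join_admits_nontrivial_chromaticallyInvariant_colouring
    {V : Type*} [Fintype V] (Γ : SimpleGraph V) (X Y : Set V)
    (hX : X.Nonempty) (hY : Y.Nonempty) (hdisj : Disjoint X Y) (hcover : X ∪ Y = Set.univ)
    (hjoin : ∀ x ∈ X, ∀ y ∈ Y, Γ.Adj x y)
    (hXn : ∀ x ∈ X, ∃ x' ∈ X, Γ.Adj x x')
    (hYn : ∀ y ∈ Y, ∃ y' ∈ Y, Γ.Adj y y') :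
    ∃ R B : SimpleGraph V, Disjoint R B ∧ R ⊔ B = Γ ∧ R ≠ ⊥ ∧ B ≠ ⊥ ∧
      ChromaticallyInvariant R B ∧
      (∀ v : V, ∃ w, R.Adj v w) ∧ (∀ v : V, ∃ w, B.Adj v w) := by
  classical
  have hmem : ∀ v : V, v ∈ X ∨ v ∈ Y := by
    intro v
    have : v ∈ X ∪ Y := hcover ▸ Set.mem_univ v
    exact this
  set R : SimpleGraph V :=
    { Adj := fun a b => Γ.Adj a b ∧ ((a ∈ X ∧ b ∈ X) ∨ (a ∈ Y ∧ b ∈ Y))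
      symm := ⟨by rintro a b ⟨h, h1 | h1⟩
                  exacts [⟨h.symm, Or.inl ⟨h1.2, h1.1⟩⟩, ⟨h.symm, Or.inr ⟨h1.2, h1.1⟩⟩]⟩
      loopless := ⟨fun a h => Γ.irrefl h.1⟩ } with hR
  set B : SimpleGraph V :=
    { Adj := fun a b => Γ.Adj a b ∧ ((a ∈ X ∧ b ∈ Y) ∨ (a ∈ Y ∧ b ∈ X))
      symm := ⟨by rintro a b ⟨h, h1 | h1⟩
                  exacts [⟨h.symm, Or.inr ⟨h1.2, h1.1⟩⟩, ⟨h.symm, Or.inl ⟨h1.2, h1.1⟩⟩]⟩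
      loopless := ⟨fun a h => Γ.irrefl h.1⟩ } with hB
  have hXY : ∀ a : V, a ∈ X → a ∈ Y → False := fun a ha hb =>
    Set.disjoint_left.mp hdisj ha hb
  have hsup : R ⊔ B = Γ := by
    ext a b
    constructor
    · rintro (h | h) <;> exact h.1
    · intro h
      rcases hmem a with ha | ha <;> rcases hmem b with hb | hb
      · exact Or.inl ⟨h, Or.inl ⟨ha, hb⟩⟩
      · exact Or.inr ⟨h, Or.inl ⟨ha, hb⟩⟩
      · exact Or.inr ⟨h, Or.inr ⟨ha, hb⟩⟩
      · exact Or.inl ⟨h, Or.inr ⟨ha, hb⟩⟩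
  have hdisjRB : Disjoint R B := by
    rw [disjoint_iff]
    ext a b
    simp only [SimpleGraph.inf_adj, SimpleGraph.bot_adj, iff_false]
    rintro ⟨⟨-, hr | hr⟩, ⟨-, hb | hb⟩⟩
    · exact hXY b hr.2 hb.2
    · exact hXY a hr.1 hb.1
    · exact hXY a hb.1 hr.1
    · exact hXY b hb.2 hr.2
  obtain ⟨x0, hx0⟩ := hX
  obtain ⟨y0, hy0⟩ := hY
  obtain ⟨x1, hx1, hx01⟩ := hXn x0 hx0
  have hRne : R ≠ ⊥ := by
    intro h
    have : R.Adj x0 x1 := ⟨hx01, Or.inl ⟨hx0, hx1⟩⟩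
    rw [h] at this; exact this
  have hBne : B ≠ ⊥ := by
    intro h
    have : B.Adj x0 y0 := ⟨hjoin x0 hx0 y0 hy0, Or.inl ⟨hx0, hy0⟩⟩
    rw [h] at this; exact this
  refine ⟨R, B, hdisjRB, hsup, hRne, hBne, ?_, ?_, ?_⟩
  · intro k
    apply Nat.card_congr
    apply Equiv.subtypeEquivRight
    intro c
    constructor
    · rintro ⟨h1, -⟩ u v h
      exact h1 u v (by simpa using h)
    · intro h
      refine ⟨fun u v hu => h u v (by simpa using hu), ?_⟩
      rintro u x v y ⟨hux, hr⟩ ⟨hvy, hb⟩ hcv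
      rcases hr with ⟨huX, hxX⟩ | ⟨huY, hxY⟩ <;> rcases hb with ⟨hvX, hyY⟩ | ⟨hvY, hyX⟩
      · exact h x y (Or.inr ⟨hjoin x hxX y hyY, Or.inl ⟨hxX, hyY⟩⟩)
      · exact absurd hcv (h u v (Or.inr ⟨hjoin u huX v hvY, Or.inl ⟨huX, hvY⟩⟩))
      · exact absurd hcv (h u v (Or.inr ⟨(hjoin v hvX u huY).symm, Or.inr ⟨huY, hvX⟩⟩))
      · exact h x y (Or.inr ⟨(hjoin y hyX x hxY).symm, Or.inr ⟨hxY, hyX⟩⟩)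
  · intro v
    rcases hmem v with hv | hv
    · obtain ⟨w, hw, hvw⟩ := hXn v hv
      exact ⟨w, hvw, Or.inl ⟨hv, hw⟩⟩
    · obtain ⟨w, hw, hvw⟩ := hYn v hv
      exact ⟨w, hvw, Or.inr ⟨hv, hw⟩⟩
  · intro v
    rcases hmem v with hv | hv
    · exact ⟨y0, hjoin v hv y0 hy0, Or.inl ⟨hv, hy0⟩⟩
    · exact ⟨x0, (hjoin x0 hx0 v hv).symm, Or.inr ⟨hv, hx0⟩⟩
end

section
/- A simple graph Γ on a finite vertex set V admits a 2-edge-colouring (R, B) with R ≠ ∅ and B ≠ ∅ such that G = (Γ, R, B) is chromatically invariant and every vertex of V is incident with at least one red edge and at least one blue edge, if and only if V admits a partition into two non-empty sets X and Y such that every vertex of X is adjacent in Γ to every vertex of Y, every vertex of X has a neighbour in X, and every vertex of Y has a neighbour in Y. -/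
open SimpleGraph Polynomial

section CIJAux

open SimpleGraph Set

variable {V : Type*}

/-- The key combinatorial consequence of chromatic invariance. -/
def CIJStar (R B G : SimpleGraph V) : Prop :=
  ∀ ⦃u x w y : V⦄, R.Adj u x → B.Adj w y → ¬G.Adj u w → ¬G.Adj x y → u = y ∨ x = w

/-- The join-with-no-isolated-vertices property. -/
def CIJRHS (G : SimpleGraph V) : Prop :=
  ∃ X Y : Set V, X.Nonempty ∧ Y.Nonempty ∧ Disjoint X Y ∧ X ∪ Y = Set.univ ∧
    (∀ x ∈ X, ∀ y ∈ Y, G.Adj x y) ∧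
    (∀ x ∈ X, ∃ x' ∈ X, G.Adj x x') ∧ (∀ y ∈ Y, ∃ y' ∈ Y, G.Adj y y')

lemma cij_star_swap {R B G : SimpleGraph V} (h : CIJStar R B G) : CIJStar B R G := by
  intro u x w y hux hwy huw hxy
  rcases h hwy hux (fun hh => huw hh.symm) (fun hh => hxy hh.symm) with h1 | h1
  · exact Or.inr h1.symm
  · exact Or.inl h1.symm

lemma cij_radj {R B G : SimpleGraph V} (hG : R ⊔ B = G) {a b : V} (h : R.Adj a b) :
    G.Adj a b := by
  rw [← hG]; exact (SimpleGraph.sup_adj R B a b).mpr (Or.inl h)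

lemma cij_badj {R B G : SimpleGraph V} (hG : R ⊔ B = G) {a b : V} (h : B.Adj a b) :
    G.Adj a b := by
  rw [← hG]; exact (SimpleGraph.sup_adj R B a b).mpr (Or.inr h)

lemma cij_cases {R B G : SimpleGraph V} (hG : R ⊔ B = G) (v w : V) :
    w = v ∨ R.Adj v w ∨ B.Adj v w ∨ (w ≠ v ∧ ¬G.Adj v w) := by
  classical
  by_cases h1 : w = v
  · exact Or.inl h1
  · by_cases h2 : G.Adj v w
    · rw [← hG, SimpleGraph.sup_adj] at h2
      rcases h2 with h2 | h2
      · exact Or.inr (Or.inl h2)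
      · exact Or.inr (Or.inr (Or.inl h2))
    · exact Or.inr (Or.inr (Or.inr ⟨h1, h2⟩))

lemma cij_f1 {R B G : SimpleGraph V} (star : CIJStar R B G) {v x y : V}
    (hx : R.Adj v x) (hy : B.Adj v y) : G.Adj x y := by
  by_contra h
  rcases star hx hy (G.irrefl) h with h1 | h1
  · rw [h1] at hy; exact B.irrefl hy
  · rw [h1] at hx; exact R.irrefl hx


lemma cij_side {R B G : SimpleGraph V} (hG : R ⊔ B = G)
    (hd : ∀ a b, R.Adj a b → B.Adj a b → False)
    (star : CIJStar R B G)
    (hr : ∀ a, ∃ b, R.Adj a b) (hb : ∀ a, ∃ b, B.Adj a b) (u : V)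
    (hα : ∀ x z, R.Adj u x → z ≠ u → ¬G.Adj u z → G.Adj x z)
    (hβ : ∀ x, R.Adj u x → ∃ x', R.Adj u x' ∧ G.Adj x x') :
    CIJRHS G := by
  refine ⟨{x | R.Adj u x}, {x | R.Adj u x}ᶜ, ?_, ?_, disjoint_compl_right,
    Set.union_compl_self _, ?_, ?_, ?_⟩
  · obtain ⟨w, hw⟩ := hr u; exact ⟨w, hw⟩
  · exact ⟨u, fun h => R.irrefl h⟩
  · intro x hx y hy
    have hx' : R.Adj u x := hx
    have hy' : ¬R.Adj u y := hy
    rcases cij_cases hG u y with h1 | h1 | h1 | ⟨h1, h2⟩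
    · rw [h1]; exact (cij_radj hG hx').symm
    · exact absurd h1 hy'
    · exact cij_f1 star hx' h1
    · exact hα x y hx' h1 h2
  · intro x hx
    obtain ⟨x', h1, h2⟩ := hβ x hx
    exact ⟨x', h1, h2⟩
  · intro y hy
    have hy' : ¬R.Adj u y := hy
    rcases cij_cases hG u y with h1 | h1 | h1 | ⟨h1, h2⟩
    · subst h1
      obtain ⟨w, hw⟩ := hb y
      exact ⟨w, fun hc => hd y w hc hw, cij_badj hG hw⟩
    · exact absurd h1 hy'
    · exact ⟨u, fun hc => R.irrefl hc, (cij_badj hG h1).symm⟩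
    · obtain ⟨w, hw⟩ := hb y
      refine ⟨w, ?_, cij_badj hG hw⟩
      intro hc
      rcases star hc hw h2 (G.irrefl) with h3 | h3
      · exact hc.ne h3
      · exact hw.ne h3.symm

lemma cij_C4 {R B G : SimpleGraph V} (hG : R ⊔ B = G)
    (hd : ∀ a b, R.Adj a b → B.Adj a b → False)
    (star : CIJStar R B G)
    (hr : ∀ a, ∃ b, R.Adj a b) (hb : ∀ a, ∃ b, B.Adj a b) (u : V)
    (hα : ∀ x z, R.Adj u x → z ≠ u → ¬G.Adj u z → G.Adj x z)
    (hα' : ∀ x z, B.Adj u x → z ≠ u → ¬G.Adj u z → G.Adj x z) :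
    CIJRHS G := by
  classical
  by_cases hβ : ∀ x, R.Adj u x → ∃ x', R.Adj u x' ∧ G.Adj x x'
  · exact cij_side hG hd star hr hb u hα hβ
  · by_cases hβ' : ∀ x, B.Adj u x → ∃ x', B.Adj u x' ∧ G.Adj x x'
    · exact cij_side (R := B) (B := R) (by rw [sup_comm]; exact hG)
        (fun a b h1 h2 => hd a b h2 h1) (cij_star_swap star) hb hr u hα' hβ'
    · exfalso
      push_neg at hβ hβ'
      obtain ⟨p, hp, hpiso⟩ := hβ
      obtain ⟨q, hq, hqiso⟩ := hβ'
      obtain ⟨q₀, hq₀⟩ := hb p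
      have hq₀Q : B.Adj u q₀ := by
        rcases cij_cases hG u q₀ with h1 | h1 | h1 | ⟨h1, h2⟩
        · exfalso; exact hd u p hp (h1 ▸ hq₀.symm)
        · exact absurd (cij_badj hG hq₀) (hpiso q₀ h1)
        · exact h1
        · exfalso
          rcases star hp hq₀.symm h2 (G.irrefl) with h3 | h3
          · exact hp.ne h3
          · exact hq₀.ne h3
      obtain ⟨p₀, hp₀⟩ := hr q
      have hp₀P : R.Adj u p₀ := by
        rcases cij_cases hG u p₀ with h1 | h1 | h1 | ⟨h1, h2⟩
        · exfalso; exact hd u q (h1 ▸ hp₀.symm) hq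
        · exact h1
        · exact absurd (cij_radj hG hp₀) (hqiso p₀ h1)
        · exfalso
          rcases star hp₀ hq.symm (G.irrefl) (fun hh => h2 hh.symm) with h3 | h3
          · exact hq.ne' h3
          · exact hp₀.ne' h3
      by_cases hpp : p₀ = p
      · by_cases hqq : q₀ = q
        · exact hd q p (hpp ▸ hp₀) (hqq ▸ hq₀).symm
        · rcases star (hpp ▸ hp₀ : R.Adj q p) hq₀.symm (hqiso q₀ hq₀Q) (G.irrefl)
            with h3 | h3
          · exact hd u p hp (h3 ▸ hq)
          · exact hd u p hp (h3.symm ▸ hq₀Q)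
      · by_cases hqq : q₀ = q
        · rcases star hp₀ ((hqq ▸ hq₀ : B.Adj p q).symm) (G.irrefl)
            (fun hh => hpiso p₀ hp₀P hh.symm) with h3 | h3
          · exact hd u p hp (h3 ▸ hq)
          · exact hd u q (h3 ▸ hp₀P) hq
        · rcases star hp₀ hq₀.symm (hqiso q₀ hq₀Q) (fun hh => hpiso p₀ hp₀P hh.symm)
            with h3 | h3
          · exact hd u p hp (h3 ▸ hq)
          · exact hd u q₀ (h3 ▸ hp₀P) hq₀Q

lemma cij_L2 {R B G : SimpleGraph V} (hG : R ⊔ B = G)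
    (hd : ∀ a b, R.Adj a b → B.Adj a b → False)
    (star : CIJStar R B G)
    (hr : ∀ a, ∃ b, R.Adj a b) (hb : ∀ a, ∃ b, B.Adj a b) (v : V)
    (hα' : ∀ x z, B.Adj v x → z ≠ v → ¬G.Adj v z → G.Adj x z)
    (q : V) (hq : B.Adj v q) (hqiso : ∀ x, B.Adj v x → ¬G.Adj q x) :
    CIJRHS G := by
  have hzQ : ∀ z, z ≠ q → ¬G.Adj q z → B.Adj v z := by
    intro z h1 h2
    rcases cij_cases hG v z with h3 | h3 | h3 | ⟨h3, h4⟩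
    · exfalso; exact h2 (h3.symm ▸ (cij_badj hG hq).symm)
    · exfalso; exact h2 (cij_f1 star h3 hq).symm
    · exact h3
    · exfalso; exact h2 (hα' q z hq h3 h4)
  apply cij_C4 hG hd star hr hb q
  · intro x z hx h1 h2
    have hzq : B.Adj v z := hzQ z h1 h2
    have hxP : R.Adj v x := by
      rcases cij_cases hG v x with h3 | h3 | h3 | ⟨h3, h4⟩
      · exfalso; exact hd v q (h3 ▸ hx).symm hq
      · exact h3
      · exfalso; exact hqiso x h3 (cij_radj hG hx)
      · exfalso; exact h4 (cij_f1 star hx hq.symm).symm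
    exact cij_f1 star hxP hzq
  · intro x z hx h1 h2
    have hzq : B.Adj v z := hzQ z h1 h2
    rcases cij_cases hG v x with h3 | h3 | h3 | ⟨h3, h4⟩
    · exact h3.symm ▸ cij_badj hG hzq
    · exact cij_f1 star h3 hzq
    · exfalso; exact hqiso x h3 (cij_badj hG hx)
    · exact (hα' z x hzq h3 h4).symm

lemma cij_case1 [Fintype V] {R B G : SimpleGraph V} [DecidableRel G.Adj]
    (hG : R ⊔ B = G)
    (hd : ∀ a b, R.Adj a b → B.Adj a b → False)
    (star : CIJStar R B G)
    (hr : ∀ a, ∃ b, R.Adj a b) (hb : ∀ a, ∃ b, B.Adj a b) (v : V)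
    (hmin : ∀ w, (G.neighborFinset v).card ≤ (G.neighborFinset w).card)
    (p z : V) (hp : R.Adj v p) (hz1 : z ≠ v) (hz2 : ¬G.Adj v z) (hpz : ¬G.Adj p z)
    (q z' : V) (hq : B.Adj v q) (hz1' : z' ≠ v) (hz2' : ¬G.Adj v z')
    (hqz' : ¬G.Adj q z') :
    False := by
  classical
  have hBz : ∀ w, B.Adj z w → B.Adj v w := by
    intro w hw
    rcases cij_cases hG v w with h1 | h1 | h1 | ⟨h1, h2⟩
    · exfalso; exact hz2 (h1 ▸ (cij_badj hG hw).symm)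
    · exfalso
      rcases star h1 hw hz2 (G.irrefl) with h3 | h3
      · exact h1.ne h3
      · exact hw.ne h3.symm
    · exact h1
    · exfalso
      rcases star hp.symm hw hpz h2 with h3 | h3
      · rw [← h3] at h2; exact h2 (cij_radj hG hp)
      · exact hz1 h3.symm
  have hRz' : ∀ w, R.Adj z' w → R.Adj v w := by
    intro w hw
    rcases cij_cases hG v w with h1 | h1 | h1 | ⟨h1, h2⟩
    · exfalso; exact hz2' (h1 ▸ (cij_radj hG hw).symm)
    · exact h1
    · exfalso
      rcases star hw h1 (fun hh => hz2' hh.symm) (G.irrefl) with h3 | h3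
      · exact hw.ne h3
      · exact h1.ne h3.symm
    · exfalso
      rcases star hw hq.symm (fun hh => hqz' hh.symm) (fun hh => h2 hh.symm) with h3 | h3
      · exact hz1' h3
      · rw [← h3] at hq; exact h2 (cij_badj hG hq)
  -- z has a red neighbour outside N[v]
  have hex : ∀ (a b : V), ¬G.Adj v a → a ≠ v → ¬G.Adj b a → G.Adj v b →
      ∃ w, G.Adj a w ∧ w ≠ v ∧ ¬G.Adj v w := by
    intro a b hva hav hba hvb
    by_contra hno
    push_neg at hno
    have hsub : G.neighborFinset a ⊆ (G.neighborFinset v).erase b := by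
      intro w hw
      rw [SimpleGraph.mem_neighborFinset] at hw
      rw [Finset.mem_erase, SimpleGraph.mem_neighborFinset]
      constructor
      · rintro rfl; exact hba hw.symm
      · by_cases hwv : w = v
        · exfalso; rw [hwv] at hw; exact hva hw.symm
        · exact hno w hw hwv
    have h1 : (G.neighborFinset a).card ≤ ((G.neighborFinset v).erase b).card :=
      Finset.card_le_card hsub
    have hbmem : b ∈ G.neighborFinset v := by
      rw [SimpleGraph.mem_neighborFinset]; exact hvb
    rw [Finset.card_erase_of_mem hbmem] at h1
    have h2 := hmin a
    have h3 : 0 < (G.neighborFinset v).card := Finset.card_pos.mpr ⟨b, hbmem⟩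
    omega
  obtain ⟨w, hzw, hwv, hvw⟩ := hex z p hz2 hz1 hpz (cij_radj hG hp)
  obtain ⟨w', hzw', hwv', hvw'⟩ := hex z' q hz2' hz1' hqz' (cij_badj hG hq)
  have hzwR : R.Adj z w := by
    rw [← hG, SimpleGraph.sup_adj] at hzw
    rcases hzw with h | h
    · exact h
    · exact absurd (cij_badj hG (hBz w h)) hvw
  have hzwB : B.Adj z' w' := by
    rw [← hG, SimpleGraph.sup_adj] at hzw'
    rcases hzw' with h | h
    · exact absurd (cij_radj hG (hRz' w' h)) hvw'
    · exact h
  have hzz : z ≠ z' := by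
    rintro rfl
    exact hvw (cij_radj hG (hRz' w hzwR))
  have hzqB : B.Adj z q := by
    have hadj : G.Adj z q := by
      by_contra h
      rcases star hzwR.symm hq (fun hh => hvw hh.symm) h with h3 | h3
      · rw [← h3] at hq; exact hvw (cij_badj hG hq)
      · exact hz1 h3
    rw [← hG, SimpleGraph.sup_adj] at hadj
    rcases hadj with h | h
    · exfalso
      rcases star h hq (fun hh => hz2 hh.symm) (G.irrefl) with h3 | h3
      · rw [h3] at hz2; exact hz2 (cij_badj hG hq)
      · exact hq.ne' h3
    · exact h
  have hz'pR : R.Adj z' p := by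
    have hadj : G.Adj p z' := by
      by_contra h
      rcases star hp hzwB.symm hvw' h with h3 | h3
      · exact hz1' h3.symm
      · rw [h3] at hp; exact hvw' (cij_radj hG hp)
    rw [← hG, SimpleGraph.sup_adj] at hadj
    rcases hadj with h | h
    · exact h.symm
    · exfalso
      rcases star hp h.symm hz2' (G.irrefl) with h3 | h3
      · exact hp.ne h3
      · rw [← h3] at hz2'; exact hz2' (cij_radj hG hp)
  rcases star hz'pR.symm hzqB hpz (fun hh => hqz' hh.symm) with h3 | h3
  · rw [← h3] at hq; exact hd v p hp hq
  · exact hzz h3.symm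

lemma cij_forward [Fintype V] (R B G : SimpleGraph V)
    (hG : R ⊔ B = G)
    (hd : ∀ a b, R.Adj a b → B.Adj a b → False)
    (star : CIJStar R B G)
    (hr : ∀ a, ∃ b, R.Adj a b) (hb : ∀ a, ∃ b, B.Adj a b)
    (hne : Nonempty V) :
    CIJRHS G := by
  classical
  letI : DecidableRel G.Adj := Classical.decRel _
  obtain ⟨v, -, hmin⟩ := Finset.exists_min_image Finset.univ
    (fun w => (G.neighborFinset w).card) ⟨Classical.arbitrary V, Finset.mem_univ _⟩
  have hmin' : ∀ w, (G.neighborFinset v).card ≤ (G.neighborFinset w).card :=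
    fun w => hmin w (Finset.mem_univ w)
  by_cases hα : ∀ x z, R.Adj v x → z ≠ v → ¬G.Adj v z → G.Adj x z
  · by_cases hβ : ∀ x, R.Adj v x → ∃ x', R.Adj v x' ∧ G.Adj x x'
    · exact cij_side hG hd star hr hb v hα hβ
    · push_neg at hβ
      obtain ⟨p, hp, hpiso⟩ := hβ
      exact cij_L2 (R := B) (B := R) (by rw [sup_comm]; exact hG)
        (fun a b h1 h2 => hd a b h2 h1) (cij_star_swap star) hb hr v hα p hp hpiso
  · by_cases hα' : ∀ x z, B.Adj v x → z ≠ v → ¬G.Adj v z → G.Adj x z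
    · by_cases hβ' : ∀ x, B.Adj v x → ∃ x', B.Adj v x' ∧ G.Adj x x'
      · exact cij_side (R := B) (B := R) (by rw [sup_comm]; exact hG)
          (fun a b h1 h2 => hd a b h2 h1) (cij_star_swap star) hb hr v hα' hβ'
      · push_neg at hβ'
        obtain ⟨q, hq, hqiso⟩ := hβ'
        exact cij_L2 hG hd star hr hb v hα' q hq hqiso
    · push_neg at hα hα'
      obtain ⟨p, z, hp, hz1, hz2, hpz⟩ := hα
      obtain ⟨q, z', hq, hz1', hz2', hqz'⟩ := hα'
      exact (cij_case1 hG hd star hr hb v hmin' p z hp hz1 hz2 hpz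
        q z' hq hz1' hz2' hqz').elim


lemma cij_proper_mixed {V : Type*} [Fintype V] {R B : SimpleGraph V}
    (hCI : ChromaticallyInvariant R B) {k : ℕ} (c : V → Fin k)
    (hcol : ∀ u v, (R ⊔ B).Adj u v → c u ≠ c v) : IsMixedColouring R B ⊥ c := by
  classical
  have hsupbot : R ⊔ B ⊔ (⊥ : SimpleGraph V) = R ⊔ B := by simp
  set S₁ : Set (V → Fin k) := {d | IsMixedColouring R B ⊥ d} with hS₁
  set S₂ : Set (V → Fin k) := {d | ∀ u v, (R ⊔ B).Adj u v → d u ≠ d v} with hS₂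
  have hsub : S₁ ⊆ S₂ := by
    intro d hd u v huv
    exact hd.1 u v (by rw [hsupbot]; exact huv)
  have heq : Nat.card S₁ = Nat.card S₂ := hCI k
  have hfin : S₂.Finite := Set.toFinite _
  have hle : S₂.ncard ≤ S₁.ncard := by
    rw [← Nat.card_coe_set_eq, ← Nat.card_coe_set_eq, heq]
  have hEQ : S₁ = S₂ := Set.eq_of_subset_of_ncard_le hsub hle hfin
  have hmem : c ∈ S₁ := by rw [hEQ]; exact hcol
  exact hmem

lemma cij_star_of_CI {V : Type*} [Fintype V] {R B : SimpleGraph V}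
    (hCI : ChromaticallyInvariant R B) : CIJStar R B (R ⊔ B) := by
  classical
  intro u x w y hux hwy huw hxy
  by_contra hcon
  push_neg at hcon
  obtain ⟨huy, hxw⟩ := hcon
  set e := Fintype.equivFin V with he
  set m : V → V := fun a => if a = w then u else if a = y then x else a with hm
  set c : V → Fin (Fintype.card V) := fun a => e (m a) with hc
  have hproper : ∀ a b, (R ⊔ B).Adj a b → c a ≠ c b := by
    intro a b hab hcab
    have hmab : m a = m b := e.injective (by simpa [hc] using hcab)
    have hne : a ≠ b := hab.ne
    by_cases ha1 : a = w
    · by_cases hb1 : b = w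
      · exact hne (ha1.trans hb1.symm)
      · by_cases hb2 : b = y
        · have hueq : u = x := by simpa [hm, ha1, hb1, hb2, hwy.ne'] using hmab
          exact hux.ne hueq
        · have hueq : u = b := by simpa [hm, ha1, hb1, hb2] using hmab
          rw [ha1, ← hueq] at hab
          exact huw hab.symm
    · by_cases ha2 : a = y
      · by_cases hb1 : b = w
        · have hueq : x = u := by simpa [hm, ha1, ha2, hb1, hwy.ne'] using hmab
          exact hux.ne hueq.symm
        · by_cases hb2 : b = y
          · exact hne (ha2.trans hb2.symm)
          · have hueq : x = b := by simpa [hm, ha1, ha2, hb1, hb2, hwy.ne'] using hmab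
            rw [ha2, ← hueq] at hab
            exact hxy hab.symm
      · by_cases hb1 : b = w
        · have hueq : a = u := by simpa [hm, ha1, ha2, hb1] using hmab
          rw [hb1, hueq] at hab
          exact huw hab
        · by_cases hb2 : b = y
          · have hueq : a = x := by simpa [hm, ha1, ha2, hb1, hb2, hwy.ne'] using hmab
            rw [hb2, hueq] at hab
            exact hxy hab
          · exact hne (by simpa [hm, ha1, ha2, hb1, hb2] using hmab)
  have hmix := cij_proper_mixed hCI c hproper
  have hmw : m w = u := by simp [hm]
  have hmu : m u = u := by
    by_cases h : u = w
    · simp [hm, h]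
    · simp [hm, h, huy]
  have hmy : m y = x := by simp [hm, hwy.ne']
  have hmx : m x = x := by simp [hm, hxw]
  have hc1 : c u = c w := by simp only [hc]; rw [hmu, hmw]
  have hc2 : c x = c y := by simp only [hc]; rw [hmx, hmy]
  exact hmix.2 u x w y hux hwy hc1 hc2

/-- Cross edges of a partition. -/
def cijCross (Γ : SimpleGraph V) (X Y : Set V) : SimpleGraph V where
  Adj a b := Γ.Adj a b ∧ ((a ∈ X ∧ b ∈ Y) ∨ (a ∈ Y ∧ b ∈ X))
  symm := ⟨by
    rintro a b ⟨h1, h2 | h2⟩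
    · exact ⟨h1.symm, Or.inr ⟨h2.2, h2.1⟩⟩
    · exact ⟨h1.symm, Or.inl ⟨h2.2, h2.1⟩⟩⟩
  loopless := ⟨fun a ha => Γ.irrefl ha.1⟩

/-- Within-side edges of a partition. -/
def cijSame (Γ : SimpleGraph V) (X Y : Set V) : SimpleGraph V where
  Adj a b := Γ.Adj a b ∧ ((a ∈ X ∧ b ∈ X) ∨ (a ∈ Y ∧ b ∈ Y))
  symm := ⟨by
    rintro a b ⟨h1, h2 | h2⟩
    · exact ⟨h1.symm, Or.inl ⟨h2.2, h2.1⟩⟩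
    · exact ⟨h1.symm, Or.inr ⟨h2.2, h2.1⟩⟩⟩
  loopless := ⟨fun a ha => Γ.irrefl ha.1⟩

@[simp] lemma cijCross_adj (Γ : SimpleGraph V) (X Y : Set V) (a b : V) :
    (cijCross Γ X Y).Adj a b ↔
      Γ.Adj a b ∧ ((a ∈ X ∧ b ∈ Y) ∨ (a ∈ Y ∧ b ∈ X)) := Iff.rfl

@[simp] lemma cijSame_adj (Γ : SimpleGraph V) (X Y : Set V) (a b : V) :
    (cijSame Γ X Y).Adj a b ↔
      Γ.Adj a b ∧ ((a ∈ X ∧ b ∈ X) ∨ (a ∈ Y ∧ b ∈ Y)) := Iff.rfl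

lemma cij_backward {V : Type*} [Fintype V] (Γ : SimpleGraph V) (h : CIJRHS Γ) :
    ∃ R B : SimpleGraph V, Disjoint R B ∧ R ⊔ B = Γ ∧ R ≠ ⊥ ∧ B ≠ ⊥ ∧
      ChromaticallyInvariant R B ∧ (∀ v, ∃ w, R.Adj v w) ∧ (∀ v, ∃ w, B.Adj v w) := by
  classical
  obtain ⟨X, Y, ⟨x₀, hx₀⟩, ⟨y₀, hy₀⟩, hdXY, hXuY, hcross, hinX, hinY⟩ := h
  have hside : ∀ a : V, a ∈ X ∨ a ∈ Y := by
    intro a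
    have : a ∈ X ∪ Y := by rw [hXuY]; exact Set.mem_univ a
    exact this
  have hdisj' : ∀ a : V, a ∈ X → a ∈ Y → False :=
    fun a h1 h2 => Set.disjoint_left.mp hdXY h1 h2
  set R : SimpleGraph V := cijCross Γ X Y with hRdef
  set B : SimpleGraph V := cijSame Γ X Y with hBdef
  have hsupRB : R ⊔ B = Γ := by
    ext a b
    rw [SimpleGraph.sup_adj]
    constructor
    · rintro (h1 | h1)
      · exact h1.1
      · exact h1.1
    · intro h1
      rcases hside a with ha | ha <;> rcases hside b with hb | hb
      · exact Or.inr ⟨h1, Or.inl ⟨ha, hb⟩⟩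
      · exact Or.inl ⟨h1, Or.inl ⟨ha, hb⟩⟩
      · exact Or.inl ⟨h1, Or.inr ⟨ha, hb⟩⟩
      · exact Or.inr ⟨h1, Or.inr ⟨ha, hb⟩⟩
  have hdRB : Disjoint R B := by
    rw [disjoint_iff]
    ext a b
    rw [SimpleGraph.inf_adj, SimpleGraph.bot_adj]
    simp only [hRdef, hBdef, cijCross_adj, cijSame_adj, iff_false]
    rintro ⟨⟨-, hc | hc⟩, ⟨-, hs | hs⟩⟩
    · exact hdisj' b hs.2 hc.2
    · exact hdisj' a hc.1 hs.1
    · exact hdisj' a hs.1 hc.1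
    · exact hdisj' b hc.2 hs.2
  have hR0 : R.Adj x₀ y₀ := ⟨hcross x₀ hx₀ y₀ hy₀, Or.inl ⟨hx₀, hy₀⟩⟩
  have hRne : R ≠ ⊥ := by
    intro hcon
    rw [hcon] at hR0
    simpa using hR0
  obtain ⟨x₁, hx₁, hxadj⟩ := hinX x₀ hx₀
  have hB0 : B.Adj x₀ x₁ := ⟨hxadj, Or.inl ⟨hx₀, hx₁⟩⟩
  have hBne : B ≠ ⊥ := by
    intro hcon
    rw [hcon] at hB0
    simpa using hB0
  have hCI : ChromaticallyInvariant R B := by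
    intro k
    apply Nat.card_congr
    apply Equiv.subtypeEquivRight
    intro c
    have hsupbot : R ⊔ B ⊔ (⊥ : SimpleGraph V) = R ⊔ B := by simp
    constructor
    · intro hmix u v huv
      exact hmix.1 u v (by rw [hsupbot]; exact huv)
    · intro hp
      refine ⟨fun u v huv => hp u v (by rwa [hsupbot] at huv), ?_⟩
      intro u x w y hux hwy hcuw
      obtain ⟨hux1, hux2⟩ := hux
      obtain ⟨hwy1, hwy2⟩ := hwy
      have hGadj : ∀ a b, Γ.Adj a b → (R ⊔ B).Adj a b := by
        intro a b hab; rw [hsupRB]; exact hab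
      have hsame : (u ∈ X ∧ w ∈ X) ∨ (u ∈ Y ∧ w ∈ Y) := by
        rcases hside u with h1 | h1 <;> rcases hside w with h2 | h2
        · exact Or.inl ⟨h1, h2⟩
        · exact absurd hcuw (hp u w (hGadj u w (hcross u h1 w h2)))
        · exact absurd hcuw (hp u w (hGadj u w (hcross w h2 u h1).symm))
        · exact Or.inr ⟨h1, h2⟩
      have hxyadj : Γ.Adj x y := by
        rcases hsame with ⟨hu, hw⟩ | ⟨hu, hw⟩
        · have hxY : x ∈ Y := by
            rcases hux2 with ⟨-, h2⟩ | ⟨h2, -⟩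
            · exact h2
            · exact (hdisj' u hu h2).elim
          have hyX : y ∈ X := by
            rcases hwy2 with ⟨-, h2⟩ | ⟨h2, -⟩
            · exact h2
            · exact (hdisj' w hw h2).elim
          exact (hcross y hyX x hxY).symm
        · have hxX : x ∈ X := by
            rcases hux2 with ⟨h2, -⟩ | ⟨-, h2⟩
            · exact (hdisj' u h2 hu).elim
            · exact h2
          have hyY : y ∈ Y := by
            rcases hwy2 with ⟨h2, -⟩ | ⟨-, h2⟩
            · exact (hdisj' w h2 hw).elim
            · exact h2
          exact hcross x hxX y hyY
      exact hp x y (hGadj x y hxyadj)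
  have hrdeg : ∀ v, ∃ w, R.Adj v w := by
    intro v
    rcases hside v with hv | hv
    · exact ⟨y₀, ⟨hcross v hv y₀ hy₀, Or.inl ⟨hv, hy₀⟩⟩⟩
    · exact ⟨x₀, ⟨(hcross x₀ hx₀ v hv).symm, Or.inr ⟨hv, hx₀⟩⟩⟩
  have hbdeg : ∀ v, ∃ w, B.Adj v w := by
    intro v
    rcases hside v with hv | hv
    · obtain ⟨x', hx', hadj⟩ := hinX v hv
      exact ⟨x', ⟨hadj, Or.inl ⟨hv, hx'⟩⟩⟩
    · obtain ⟨y', hy', hadj⟩ := hinY v hv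
      exact ⟨y', ⟨hadj, Or.inr ⟨hv, hy'⟩⟩⟩
  exact ⟨R, B, hdRB, hsupRB, hRne, hBne, hCI, hrdeg, hbdeg⟩

end CIJAux


/-- A graph admits a non-trivial chromatically invariant 2-edge-colouring in which every
vertex is incident with both a red and a blue edge iff it is the join of two graphs each
of which has no isolated vertices. -/
theorem nontrivial_chromaticallyInvariant_colouring_iff_join
    {V : Type*} [Fintype V] (Γ : SimpleGraph V) :
    (∃ R B : SimpleGraph V, Disjoint R B ∧ R ⊔ B = Γ ∧ R ≠ ⊥ ∧ B ≠ ⊥ ∧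
      ChromaticallyInvariant R B ∧
      (∀ v : V, ∃ w, R.Adj v w) ∧ (∀ v : V, ∃ w, B.Adj v w)) ↔
    (∃ X Y : Set V, X.Nonempty ∧ Y.Nonempty ∧ Disjoint X Y ∧ X ∪ Y = Set.univ ∧
      (∀ x ∈ X, ∀ y ∈ Y, Γ.Adj x y) ∧
      (∀ x ∈ X, ∃ x' ∈ X, Γ.Adj x x') ∧ (∀ y ∈ Y, ∃ y' ∈ Y, Γ.Adj y y')) := by
  constructor
  · rintro ⟨R, B, hdisj, hsup, hRne, hBne, hCI, hr, hb⟩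
    have hd : ∀ a b, R.Adj a b → B.Adj a b → False := by
      intro a b h1 h2
      have h3 : (R ⊓ B).Adj a b := by rw [SimpleGraph.inf_adj]; exact ⟨h1, h2⟩
      rw [disjoint_iff.mp hdisj] at h3
      simpa using h3
    have hVne : Nonempty V := by
      by_contra hcon
      apply hRne
      ext a b
      exact (hcon ⟨a⟩).elim
    have hstar0 : CIJStar R B (R ⊔ B) := cij_star_of_CI hCI
    have hstar : CIJStar R B Γ := by rwa [hsup] at hstar0
    exact cij_forward R B Γ hsup hd hstar hr hb hVne
  · intro h
    exact cij_backward Γ h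
end

section
/- Let G = (Γ, R, B) be a 2-edge-coloured graph on n ≥ 1 vertices such that χ(G) = n (equivalently, G admits no (n−1)-colouring). Let H be the 2-edge-coloured graph obtained as the disjoint union of G with a single red edge on two new vertices (no other edges are added). Then for every natural number k, the number of k-colourings of H equals k(k−1)(k−2)⋯(k−n+1) · (k² − k − 2|B|), as an equation in the integers. -/
open SimpleGraph Polynomial

section Aux

variable {V : Type*} {R B : SimpleGraph V}

@[simp] lemma disjUnion_adj_ll {α β : Type*} (G : SimpleGraph α) (H : SimpleGraph β) (a b : α) :
    (disjUnion G H).Adj (Sum.inl a) (Sum.inl b) ↔ G.Adj a b := Iff.rfl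

@[simp] lemma disjUnion_adj_rr {α β : Type*} (G : SimpleGraph α) (H : SimpleGraph β) (a b : β) :
    (disjUnion G H).Adj (Sum.inr a) (Sum.inr b) ↔ H.Adj a b := Iff.rfl

@[simp] lemma disjUnion_adj_lr {α β : Type*} (G : SimpleGraph α) (H : SimpleGraph β) (a : α) (b : β) :
    (disjUnion G H).Adj (Sum.inl a) (Sum.inr b) ↔ False := Iff.rfl

@[simp] lemma disjUnion_adj_rl {α β : Type*} (G : SimpleGraph α) (H : SimpleGraph β) (a : β) (b : α) :
    (disjUnion G H).Adj (Sum.inr a) (Sum.inl b) ↔ False := Iff.rfl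

/-- Mixed colourings only depend on the equality pattern of colours. -/
lemma IsMixedColouring.transfer {k m : ℕ} {c : V → Fin k} {c' : V → Fin m}
    (h : ∀ a b, c' a = c' b ↔ c a = c b) (hc : IsMixedColouring R B ⊥ c) :
    IsMixedColouring R B ⊥ c' :=
  ⟨fun u v ha he => hc.1 u v ha ((h u v).1 he),
   fun u x v y hr hb he hxy => hc.2 u x v y hr hb ((h u v).1 he) ((h x y).1 hxy)⟩

/-- If no `(n-1)`-colouring exists, every colouring is injective. -/
lemma colouring_injective [Fintype V]
    (hchi : ¬ ∃ c : V → Fin (Fintype.card V - 1), IsMixedColouring R B ⊥ c)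
    {k : ℕ} {c : V → Fin k} (hc : IsMixedColouring R B ⊥ c) : Function.Injective c := by
  classical
  by_contra hinj
  set s : Finset (Fin k) := Finset.univ.image c with hs
  have hlt : s.card ≤ Fintype.card V - 1 := by
    have hle : s.card ≤ Fintype.card V := by
      calc s.card ≤ Finset.univ.card := Finset.card_image_le
        _ = Fintype.card V := Finset.card_univ
    have hne : s.card ≠ Fintype.card V := by
      intro h
      apply hinj
      rw [← Set.injOn_univ, ← Finset.coe_univ]
      exact Finset.card_image_iff.1 (by rw [← hs, h, Finset.card_univ])
    omega
  have hmem : ∀ v, c v ∈ s := fun v => Finset.mem_image_of_mem c (Finset.mem_univ v)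
  set c' : V → Fin (Fintype.card V - 1) :=
    fun v => Fin.castLE hlt (s.equivFin ⟨c v, hmem v⟩) with hc'
  refine hchi ⟨c', hc.transfer (fun a b => ?_)⟩
  constructor
  · intro h
    have h2 := s.equivFin.injective (Fin.castLE_injective hlt h)
    simpa using congrArg Subtype.val h2
  · intro h; simp only [hc', h]

end Aux

/-- Counting the admissible colour pairs for the extra red edge. -/
lemma fiber_count {V : Type*} [Fintype V] (B : SimpleGraph V) {k : ℕ} (e : V ↪ Fin k) :
    2 * Nat.card B.edgeSet +
      Nat.card {p : Fin k × Fin k //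
        p.1 ≠ p.2 ∧ ∀ v y, B.Adj v y → ¬(p.1 = e v ∧ p.2 = e y)} =
    k * k - k := by
  classical
  set Q : Fin k × Fin k → Prop :=
    fun p => ∀ v y, B.Adj v y → ¬(p.1 = e v ∧ p.2 = e y) with hQ
  -- the bad pairs are in bijection with ordered blue edges
  have hbadequiv : {d : V × V // B.Adj d.1 d.2} ≃
      {q : {p : Fin k × Fin k // p.1 ≠ p.2} // ¬ Q q.1} := by
    refine Equiv.ofBijective
      (fun d => ⟨⟨(e d.1.1, e d.1.2), fun h => (d.2.ne (e.injective h))⟩,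
        fun hall => hall d.1.1 d.1.2 d.2 ⟨rfl, rfl⟩⟩) ⟨?_, ?_⟩
    · rintro ⟨⟨a, b⟩, hab⟩ ⟨⟨a', b'⟩, hab'⟩ h
      simp only [Subtype.mk.injEq, Prod.mk.injEq] at h
      simp [e.injective h.1, e.injective h.2]
    · rintro ⟨⟨⟨s, t⟩, hst⟩, hbad⟩
      simp only [hQ] at hbad
      push_neg at hbad
      obtain ⟨v, y, hvy, h1, h2⟩ := hbad
      refine ⟨⟨(v, y), hvy⟩, ?_⟩
      simp only [Subtype.mk.injEq, Prod.mk.injEq]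
      exact ⟨h1.symm, h2.symm⟩
  -- ordered blue edges are twice the blue edges
  have hdart : Nat.card {d : V × V // B.Adj d.1 d.2} = 2 * Nat.card B.edgeSet := by
    have e1 : B.Dart ≃ {d : V × V // B.Adj d.1 d.2} :=
      ⟨fun d => ⟨d.toProd, d.adj⟩, fun d => ⟨d.1, d.2⟩, fun d => rfl, fun d => rfl⟩
    rw [← Nat.card_congr e1]
    simp [Nat.card_eq_fintype_card, SimpleGraph.dart_card_eq_twice_card_edges,
      SimpleGraph.edgeFinset_card]
  -- the diagonal has k elements
  have hdiag : Fintype.card {p : Fin k × Fin k // p.1 = p.2} = k := by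
    have e2 : {p : Fin k × Fin k // p.1 = p.2} ≃ Fin k :=
      ⟨fun q => q.1.1, fun a => ⟨(a, a), rfl⟩,
        by rintro ⟨⟨a, b⟩, h⟩; cases h; rfl, fun a => rfl⟩
    rw [Fintype.card_congr e2, Fintype.card_fin]
  -- off-diagonal count
  have hoff : Fintype.card {p : Fin k × Fin k // p.1 ≠ p.2} = k * k - k := by
    rw [Fintype.card_subtype_compl, hdiag, Fintype.card_prod, Fintype.card_fin]
  -- split off-diagonal into good and bad
  have hsplit : Fintype.card {q : {p : Fin k × Fin k // p.1 ≠ p.2} // Q q.1} +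
      Fintype.card {q : {p : Fin k × Fin k // p.1 ≠ p.2} // ¬ Q q.1} =
      Fintype.card {p : Fin k × Fin k // p.1 ≠ p.2} := by
    rw [← Fintype.card_sum]
    exact Fintype.card_congr (Equiv.sumCompl _)
  have hgood : Nat.card {p : Fin k × Fin k //
      p.1 ≠ p.2 ∧ ∀ v y, B.Adj v y → ¬(p.1 = e v ∧ p.2 = e y)} =
      Fintype.card {q : {p : Fin k × Fin k // p.1 ≠ p.2} // Q q.1} := by
    rw [Nat.card_eq_fintype_card]
    exact (Fintype.card_congr
      (Equiv.subtypeSubtypeEquivSubtypeInter (fun p : Fin k × Fin k => p.1 ≠ p.2) Q)).symm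
  have hbad' : Nat.card {d : V × V // B.Adj d.1 d.2} =
      Fintype.card {q : {p : Fin k × Fin k // p.1 ≠ p.2} // ¬ Q q.1} := by
    rw [← Nat.card_eq_fintype_card]
    exact Nat.card_congr hbadequiv
  omega

section Main

variable {V : Type*} [Fintype V] {R B : SimpleGraph V}

lemma restrict_col {k : ℕ} {c : V ⊕ Fin 2 → Fin k}
    (hc : IsMixedColouring (disjUnion R (⊤ : SimpleGraph (Fin 2)))
      (disjUnion B (⊥ : SimpleGraph (Fin 2))) ⊥ c) :
    IsMixedColouring R B ⊥ (fun v => c (Sum.inl v)) := by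
  constructor
  · intro u v h
    refine hc.1 (Sum.inl u) (Sum.inl v) ?_
    simp only [SimpleGraph.sup_adj, SimpleGraph.bot_adj, or_false, disjUnion_adj_ll] at h ⊢
    exact h
  · intro u x v y hr hb
    exact hc.2 (Sum.inl u) (Sum.inl x) (Sum.inl v) (Sum.inl y)
      ((disjUnion_adj_ll _ _ _ _).2 hr) ((disjUnion_adj_ll _ _ _ _).2 hb)

lemma mixed_extend (hRB : Disjoint R B) {k : ℕ} (e : V ↪ Fin k)
    {s t : Fin k} (hst : s ≠ t)
    (hsafe : ∀ v y, B.Adj v y → ¬(s = e v ∧ t = e y)) :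
    IsMixedColouring (disjUnion R (⊤ : SimpleGraph (Fin 2)))
      (disjUnion B (⊥ : SimpleGraph (Fin 2))) ⊥
      (Sum.elim e (fun i => if i = 0 then s else t)) := by
  have hRBadj : ∀ a b, R.Adj a b → B.Adj a b → False := fun a b h1 h2 => hRB.le_bot ⟨h1, h2⟩
  constructor
  · rintro (u | i) (v | j) h heq <;>
      simp only [SimpleGraph.sup_adj, SimpleGraph.bot_adj, SimpleGraph.top_adj,
        disjUnion_adj_ll, disjUnion_adj_rr, disjUnion_adj_lr, disjUnion_adj_rl,
        or_false, false_or, or_self, Sum.elim_inl, Sum.elim_inr] at h heq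
    · rcases h with h | h
      · exact h.ne (e.injective heq)
      · exact h.ne (e.injective heq)
    · fin_cases i <;> fin_cases j <;> simp_all
  · rintro (u | i) (x | j) (v | i2) (y | j2) hr hb heq hxy <;>
      simp only [disjUnion_adj_ll, disjUnion_adj_rr, disjUnion_adj_lr, disjUnion_adj_rl,
        SimpleGraph.top_adj, SimpleGraph.bot_adj, Sum.elim_inl, Sum.elim_inr] at hr hb heq hxy
    all_goals try exact hb
    all_goals try exact hr
    · have h1 : u = v := e.injective heq
      have h2 : x = y := e.injective hxy
      subst h1; subst h2
      exact hRBadj u x hr hb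
    · fin_cases i <;> fin_cases j <;> simp at hr heq hxy
      · exact hsafe v y hb ⟨heq, hxy⟩
      · exact hsafe y v hb.symm ⟨hxy, heq⟩

noncomputable def mainEquiv (R B : SimpleGraph V) (hRB : Disjoint R B)
    (hchi : ¬ ∃ c : V → Fin (Fintype.card V - 1), IsMixedColouring R B ⊥ c) (k : ℕ) :
    {c : V ⊕ Fin 2 → Fin k // IsMixedColouring (disjUnion R (⊤ : SimpleGraph (Fin 2)))
      (disjUnion B (⊥ : SimpleGraph (Fin 2))) ⊥ c} ≃
    {x : (V ↪ Fin k) × (Fin k × Fin k) // x.2.1 ≠ x.2.2 ∧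
      ∀ v y, B.Adj v y → ¬(x.2.1 = x.1 v ∧ x.2.2 = x.1 y)} where
  toFun c :=
    ⟨(⟨fun v => c.1 (Sum.inl v), colouring_injective hchi (restrict_col c.2)⟩,
      (c.1 (Sum.inr 0), c.1 (Sum.inr 1))),
      c.2.1 (Sum.inr 0) (Sum.inr 1) (by simp),
      fun v y hb hpair => c.2.2 (Sum.inr 0) (Sum.inr 1) (Sum.inl v) (Sum.inl y)
        (by simp) ((disjUnion_adj_ll _ _ _ _).2 hb) hpair.1 hpair.2⟩
  invFun x :=
    ⟨Sum.elim x.1.1 (fun i => if i = 0 then x.1.2.1 else x.1.2.2),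
      mixed_extend hRB x.1.1 x.2.1 x.2.2⟩
  left_inv := by
    rintro ⟨c, hc⟩
    apply Subtype.ext
    funext z
    rcases z with v | i
    · rfl
    · fin_cases i <;> simp
  right_inv := by
    rintro ⟨⟨e, s, t⟩, h⟩
    apply Subtype.ext
    refine Prod.ext ?_ ?_
    · apply DFunLike.ext
      intro v
      rfl
    · simp

end Main

theorem final
    {V : Type*} [Fintype V] (R B : SimpleGraph V) (hRB : Disjoint R B)
    (hn : 1 ≤ Fintype.card V)
    (hchi : ¬ ∃ c : V → Fin (Fintype.card V - 1), IsMixedColouring R B ⊥ c) :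
    ∀ k : ℕ,
      ((Nat.card {c : V ⊕ Fin 2 → Fin k // IsMixedColouring (disjUnion R (⊤ : SimpleGraph (Fin 2)))
          (disjUnion B (⊥ : SimpleGraph (Fin 2))) ⊥ c}) : ℤ) =
        (∏ i ∈ Finset.range (Fintype.card V), ((k : ℤ) - (i : ℤ))) *
          ((k : ℤ) ^ 2 - (k : ℤ) - 2 * (Nat.card B.edgeSet : ℤ)) := by
  intro k
  classical
  set n := Fintype.card V with hn'
  set M : ℕ := k * k - k - 2 * Nat.card B.edgeSet with hM
  have hcard : Nat.card {c : V ⊕ Fin 2 → Fin k //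
      IsMixedColouring (disjUnion R (⊤ : SimpleGraph (Fin 2)))
        (disjUnion B (⊥ : SimpleGraph (Fin 2))) ⊥ c} =
      Fintype.card (V ↪ Fin k) * M := by
    rw [Nat.card_congr ((mainEquiv R B hRB hchi k).trans
      (Equiv.subtypeProdEquivSigmaSubtype
        (fun (e : V ↪ Fin k) (p : Fin k × Fin k) =>
          p.1 ≠ p.2 ∧ ∀ v y, B.Adj v y → ¬(p.1 = e v ∧ p.2 = e y))))]
    rw [Nat.card_eq_fintype_card, Fintype.card_sigma]
    rw [Finset.sum_congr rfl (fun e _ => ?_), Finset.sum_const, Finset.card_univ, smul_eq_mul]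
    have h := fiber_count B e
    rw [← Nat.card_eq_fintype_card]
    omega
  rw [hcard]
  rcases lt_or_ge k n with hk | hk
  · have h0 : Fintype.card (V ↪ Fin k) = 0 := by
      rw [Fintype.card_embedding_eq, Fintype.card_fin]
      exact Nat.descFactorial_eq_zero_iff_lt.2 hk
    rw [h0]
    rw [Finset.prod_eq_zero (Finset.mem_range.2 hk) (by simp : ((k : ℤ) - (k : ℕ)) = 0)]
    simp
  · obtain ⟨e0⟩ : Nonempty (V ↪ Fin k) :=
      Function.Embedding.nonempty_of_card_le (by simpa using hk)
    have hB2 : 2 * Nat.card B.edgeSet ≤ k * k - k := by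
      have := fiber_count B e0; omega
    have hkk : k ≤ k * k := Nat.le_mul_of_pos_left k (by omega)
    have hemb : (Fintype.card (V ↪ Fin k) : ℤ) =
        ∏ i ∈ Finset.range n, ((k : ℤ) - (i : ℤ)) := by
      rw [Fintype.card_embedding_eq, Fintype.card_fin, ← hn',
        Nat.descFactorial_eq_prod_range, Nat.cast_prod]
      refine Finset.prod_congr rfl fun i hi => ?_
      rw [Finset.mem_range] at hi
      rw [Nat.cast_sub (by omega)]
    rw [Nat.cast_mul, hemb, hM]
    rw [Nat.cast_sub hB2, Nat.cast_sub hkk, Nat.cast_mul]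
    push_cast
    ring

/-- For a 2-edge-coloured graph `G` on `n` vertices with `χ(G) = n` (no
`(n-1)`-colouring exists), the number of `k`-colourings of the disjoint union of `G`
with a single red edge is `k(k-1)⋯(k-n+1)(k² - k - 2|B|)`. -/
theorem numColourings_disjUnion_redEdge
    {V : Type*} [Fintype V] (R B : SimpleGraph V) (hRB : Disjoint R B)
    (hn : 1 ≤ Fintype.card V)
    (hchi : ¬ ∃ c : V → Fin (Fintype.card V - 1), IsMixedColouring R B ⊥ c) :
    ∀ k : ℕ,
      (numColourings (disjUnion R (⊤ : SimpleGraph (Fin 2)))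
          (disjUnion B (⊥ : SimpleGraph (Fin 2))) ⊥ k : ℤ) =
        (∏ i ∈ Finset.range (Fintype.card V), ((k : ℤ) - (i : ℤ))) *
          ((k : ℤ) ^ 2 - (k : ℤ) - 2 * (Nat.card B.edgeSet : ℤ)) := by
  intro k
  rw [numColourings]
  exact final R B hRB hn hchi k
end

section
/- Let n ≥ 2, let K_n^b be the 2-edge-coloured complete graph on n vertices all of whose edges are blue, and let H be the disjoint union of K_n^b with a single red edge on two new vertices. Then for every natural number k, the number of k-colourings of H equals k(k−1)(k−2)⋯(k−n) · (k+n−1), as an equation in the integers. -/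
open SimpleGraph Polynomial

section aux
variable {n k : ℕ}

lemma R_adj (u v : Fin n ⊕ Fin 2) :
    (disjUnion (⊥ : SimpleGraph (Fin n)) (⊤ : SimpleGraph (Fin 2))).Adj u v ↔
      ∃ a b : Fin 2, a ≠ b ∧ u = Sum.inr a ∧ v = Sum.inr b := by
  rcases u with i | a <;> rcases v with j | b <;> simp [disjUnion]

lemma B_adj (u v : Fin n ⊕ Fin 2) :
    (disjUnion (⊤ : SimpleGraph (Fin n)) (⊥ : SimpleGraph (Fin 2))).Adj u v ↔
      ∃ i j : Fin n, i ≠ j ∧ u = Sum.inl i ∧ v = Sum.inl j := by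
  rcases u with i | a <;> rcases v with j | b <;> simp [disjUnion]

lemma adj_unfold (u v : Fin n ⊕ Fin 2) :
    ((disjUnion (⊥ : SimpleGraph (Fin n)) (⊤ : SimpleGraph (Fin 2))) ⊔
      (disjUnion (⊤ : SimpleGraph (Fin n)) (⊥ : SimpleGraph (Fin 2))) ⊔ ⊥).Adj u v ↔
      (∃ i j, i ≠ j ∧ u = Sum.inl i ∧ v = Sum.inl j) ∨
      (∃ a b : Fin 2, a ≠ b ∧ u = Sum.inr a ∧ v = Sum.inr b) := by
  rw [SimpleGraph.sup_adj, SimpleGraph.sup_adj, SimpleGraph.bot_adj, R_adj, B_adj]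
  constructor
  · rintro ((⟨a, b, h⟩ | ⟨i, j, h⟩) | h)
    · exact Or.inr ⟨a, b, h⟩
    · exact Or.inl ⟨i, j, h⟩
    · exact h.elim
  · rintro (⟨i, j, h⟩ | ⟨a, b, h⟩)
    · exact Or.inl (Or.inr ⟨i, j, h⟩)
    · exact Or.inl (Or.inl ⟨a, b, h⟩)

def MixQ (f : Fin n → Fin k) (pq : Fin k × Fin k) : Prop :=
  Function.Injective f ∧ pq.1 ≠ pq.2 ∧ ¬(pq.1 ∈ Set.range f ∧ pq.2 ∈ Set.range f)

lemma mixedIff (c : Fin n ⊕ Fin 2 → Fin k) :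
    IsMixedColouring (disjUnion (⊥ : SimpleGraph (Fin n)) (⊤ : SimpleGraph (Fin 2)))
      (disjUnion (⊤ : SimpleGraph (Fin n)) (⊥ : SimpleGraph (Fin 2))) ⊥ c ↔
    MixQ (fun i => c (Sum.inl i)) (c (Sum.inr 0), c (Sum.inr 1)) := by
  constructor
  · rintro ⟨h1, h2⟩
    refine ⟨?_, ?_, ?_⟩
    · intro i j hc
      by_contra hij
      exact h1 _ _ ((adj_unfold _ _).2 (Or.inl ⟨i, j, hij, rfl, rfl⟩)) hc
    · exact h1 _ _ ((adj_unfold _ _).2 (Or.inr ⟨0, 1, by decide, rfl, rfl⟩))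
    · rintro ⟨⟨i, hi⟩, ⟨j, hj⟩⟩
      simp only at hi hj
      have hij : i ≠ j := by
        rintro rfl
        exact (h1 _ _ ((adj_unfold _ _).2 (Or.inr ⟨0, 1, by decide, rfl, rfl⟩)))
          (hi.symm.trans hj)
      have hR : (disjUnion (⊥ : SimpleGraph (Fin n)) (⊤ : SimpleGraph (Fin 2))).Adj
          (Sum.inr 0) (Sum.inr 1) := (R_adj _ _).2 ⟨0, 1, by decide, rfl, rfl⟩
      have hB : (disjUnion (⊤ : SimpleGraph (Fin n)) (⊥ : SimpleGraph (Fin 2))).Adj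
          (Sum.inl i) (Sum.inl j) := (B_adj _ _).2 ⟨i, j, hij, rfl, rfl⟩
      exact h2 _ _ _ _ hR hB hi.symm hj.symm
  · rintro ⟨hinj, h01, hno⟩
    constructor
    · intro u v hadj
      rcases (adj_unfold _ _).1 hadj with ⟨i, j, hij, rfl, rfl⟩ | ⟨a, b, hab, rfl, rfl⟩
      · exact fun hc => hij (hinj hc)
      · fin_cases a <;> fin_cases b
        · exact absurd rfl hab
        · exact h01
        · exact fun h => h01 h.symm
        · exact absurd rfl hab
    · intro u x v y hR hB
      rcases (R_adj _ _).1 hR with ⟨a, b, hab, rfl, rfl⟩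
      rcases (B_adj _ _).1 hB with ⟨i, j, hij, rfl, rfl⟩
      intro hc hxy
      fin_cases a <;> fin_cases b
      · exact hab rfl
      · exact hno ⟨⟨i, hc.symm⟩, ⟨j, hxy.symm⟩⟩
      · exact hno ⟨⟨j, hxy.symm⟩, ⟨i, hc.symm⟩⟩
      · exact hab rfl
end aux

section count
variable {n k : ℕ}

lemma fiber_card (f : Fin n → Fin k) (hf : Function.Injective f) :
    Nat.card {pq : Fin k × Fin k // MixQ f pq} = (k * k - k) - (n * n - n) := by
  classical
  rw [Nat.card_eq_fintype_card, Fintype.card_subtype]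
  have ht : (Finset.univ.image f).card = n := by
    rw [Finset.card_image_of_injective _ hf, Finset.card_univ, Fintype.card_fin]
  have hset : Finset.univ.filter (MixQ f)
      = (Finset.univ : Finset (Fin k)).offDiag \ (Finset.univ.image f).offDiag := by
    ext ⟨p, q⟩
    simp only [Finset.mem_filter, Finset.mem_sdiff, Finset.mem_offDiag, Finset.mem_univ,
      Finset.mem_image, true_and, MixQ, Set.mem_range, hf]
    tauto
  rw [hset, Finset.card_sdiff_of_subset (Finset.offDiag_mono (Finset.subset_univ _)),
    Finset.offDiag_card, Finset.offDiag_card, ht, Finset.card_univ, Fintype.card_fin]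

lemma fiber_card_zero (f : Fin n → Fin k) (hf : ¬Function.Injective f) :
    Nat.card {pq : Fin k × Fin k // MixQ f pq} = 0 := by
  have : IsEmpty {pq : Fin k × Fin k // MixQ f pq} := ⟨fun x => hf x.2.1⟩
  simp [Nat.card_of_isEmpty]

lemma count_main :
    numColourings (disjUnion (⊥ : SimpleGraph (Fin n)) (⊤ : SimpleGraph (Fin 2)))
      (disjUnion (⊤ : SimpleGraph (Fin n)) (⊥ : SimpleGraph (Fin 2))) ⊥ k
      = k.descFactorial n * ((k * k - k) - (n * n - n)) := by
  classical
  rw [numColourings]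
  have e1 : {c : Fin n ⊕ Fin 2 → Fin k //
        IsMixedColouring (disjUnion (⊥ : SimpleGraph (Fin n)) (⊤ : SimpleGraph (Fin 2)))
          (disjUnion (⊤ : SimpleGraph (Fin n)) (⊥ : SimpleGraph (Fin 2))) ⊥ c}
      ≃ Σ f : Fin n → Fin k, {pq : Fin k × Fin k // MixQ f pq} :=
    (Equiv.subtypeEquiv ((Equiv.sumArrowEquivProdArrow _ _ _).trans
      ((Equiv.refl _).prodCongr (piFinTwoEquiv _))) (fun c => mixedIff c)).trans
      (Equiv.subtypeProdEquivSigmaSubtype MixQ)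
  rw [Nat.card_congr e1, Nat.card_eq_fintype_card, Fintype.card_sigma]
  have hterm : ∀ f : Fin n → Fin k, Fintype.card {pq : Fin k × Fin k // MixQ f pq}
      = if Function.Injective f then (k * k - k) - (n * n - n) else 0 := by
    intro f
    rw [← Nat.card_eq_fintype_card]
    by_cases hf : Function.Injective f
    · rw [fiber_card f hf, if_pos hf]
    · rw [fiber_card_zero f hf, if_neg hf]
  calc (∑ f : Fin n → Fin k, Fintype.card {pq : Fin k × Fin k // MixQ f pq})
      = ∑ f : Fin n → Fin k,
          if Function.Injective f then (k * k - k) - (n * n - n) else 0 :=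
        Finset.sum_congr rfl fun f _ => hterm f
    _ = ∑ f ∈ Finset.univ.filter (fun f : Fin n → Fin k => Function.Injective f),
          ((k * k - k) - (n * n - n)) := (Finset.sum_filter _ _).symm
    _ = (Finset.univ.filter (fun f : Fin n → Fin k => Function.Injective f)).card
          * ((k * k - k) - (n * n - n)) := by
        rw [Finset.sum_const, smul_eq_mul]
    _ = k.descFactorial n * ((k * k - k) - (n * n - n)) := by
        congr 1
        rw [← Fintype.card_subtype,
          Fintype.card_congr (Equiv.subtypeInjectiveEquivEmbedding (Fin n) (Fin k)),
          Fintype.card_embedding_eq, Fintype.card_fin, Fintype.card_fin]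
end count

lemma cast_descFactorial (k m : ℕ) (h : m ≤ k) :
    (k.descFactorial m : ℤ) = ∏ i ∈ Finset.range m, ((k : ℤ) - (i : ℤ)) := by
  induction m with
  | zero => simp
  | succ m ih =>
    rw [Finset.prod_range_succ, Nat.descFactorial_succ, Nat.cast_mul,
      Nat.cast_sub (le_of_lt h), ← ih (le_of_lt h)]
    ring


/-- The number of `k`-colourings of the disjoint union of an all-blue complete graph on
`n ≥ 2` vertices with a single red edge is `k(k-1)⋯(k-n)(k+n-1)`. -/
theorem numColourings_blueComplete_disjUnion_redEdge (n : ℕ) (hn : 2 ≤ n) :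
    ∀ k : ℕ,
      (numColourings (disjUnion (⊥ : SimpleGraph (Fin n)) (⊤ : SimpleGraph (Fin 2)))
          (disjUnion (⊤ : SimpleGraph (Fin n)) (⊥ : SimpleGraph (Fin 2))) ⊥ k : ℤ) =
        (∏ i ∈ Finset.range (n + 1), ((k : ℤ) - (i : ℤ))) * ((k : ℤ) + (n : ℤ) - 1) := by
  intro k
  rw [count_main]
  rcases le_or_gt n k with h | h
  · have e1 : ∀ m : ℕ, m * m - m = m * (m - 1) := by
      intro m
      cases m with
      | zero => rfl
      | succ p => rw [Nat.succ_sub_one, Nat.mul_succ]; omega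
    have h1 : n * (n - 1) ≤ k * (k - 1) :=
      Nat.mul_le_mul h (Nat.sub_le_sub_right h 1)
    have hk1 : 1 ≤ k := le_trans (by omega) h
    have hn1 : 1 ≤ n := by omega
    rw [e1 k, e1 n, Nat.cast_mul, Nat.cast_sub h1, Nat.cast_mul, Nat.cast_mul,
      Nat.cast_sub hk1, Nat.cast_sub hn1, Nat.cast_one,
      cast_descFactorial k n h, Finset.prod_range_succ]
    ring
  · rw [(Nat.descFactorial_eq_zero_iff_lt).2 h, Nat.zero_mul, Nat.cast_zero,
      Finset.prod_eq_zero (Finset.mem_range.2 (by omega : k < n + 1))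
        (show (k : ℤ) - (k : ℤ) = 0 by ring), zero_mul]
end

section
/- Let G be a 2-edge-coloured graph on n ≥ 1 vertices and let P be its chromatic polynomial. If q is a rational number with P(q) = 0, then q is an integer. -/
open SimpleGraph Polynomial

section ChromAux

open Function Finset

variable {V : Type*} [Fintype V] (R B : SimpleGraph V)

set_option linter.unusedSectionVars false in
private lemma mixed_comp {k k' : ℕ} {g : Fin k → Fin k'} (hg : Function.Injective g)
    (c : V → Fin k) :
    IsMixedColouring R B ⊥ (g ∘ c) ↔ IsMixedColouring R B ⊥ c := by
  unfold IsMixedColouring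
  simp only [Function.comp_apply, ne_eq, hg.eq_iff]

private def SurjCol (j : ℕ) : Type _ :=
  {c : V → Fin j // IsMixedColouring R B ⊥ c ∧ Function.Surjective c}

private instance (j : ℕ) : Finite (SurjCol R B j) := by
  unfold SurjCol; infer_instance

private instance permSetoid (j : ℕ) : Setoid (SurjCol R B j) where
  r c c' := ∃ σ : Equiv.Perm (Fin j), ⇑σ ∘ c.1 = c'.1
  iseqv := by
    refine ⟨fun c => ⟨1, rfl⟩, ?_, ?_⟩
    · rintro c c' ⟨σ, h⟩
      exact ⟨σ.symm, by rw [← h]; funext v; simp⟩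
    · rintro a b c ⟨σ, h⟩ ⟨τ, h'⟩
      refine ⟨σ.trans τ, ?_⟩
      rw [Equiv.coe_trans, Function.comp_assoc, h, h']

private noncomputable def Norb (j : ℕ) : ℕ := Nat.card (Quotient (permSetoid R B j))

private lemma card_surjCol (j : ℕ) :
    Nat.card (SurjCol R B j) = Norb R B j * j.factorial := by
  have hF : Function.Bijective (fun p : Quotient (permSetoid R B j) × Equiv.Perm (Fin j) =>
      (⟨⇑p.2 ∘ p.1.out.1, (mixed_comp R B p.2.injective _).2 p.1.out.2.1,
        p.2.surjective.comp p.1.out.2.2⟩ : SurjCol R B j)) := by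
    constructor
    · rintro ⟨t, σ⟩ ⟨t', σ'⟩ h
      have h1 : ⇑σ ∘ t.out.1 = ⇑σ' ∘ t'.out.1 := congrArg Subtype.val h
      have ht : t = t' := by
        rw [← Quotient.out_equiv_out]
        refine ⟨σ.trans σ'.symm, ?_⟩
        funext v
        have h2 := congrFun h1 v
        simp only [Equiv.coe_trans, Function.comp_apply] at h2 ⊢
        rw [h2, Equiv.symm_apply_apply]
      subst ht
      have hσ : σ = σ' := by
        apply Equiv.ext
        intro x
        obtain ⟨v, rfl⟩ := t.out.2.2 x
        simpa using congrFun h1 v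
      rw [hσ]
    · intro d
      obtain ⟨σ, hσ⟩ := Quotient.mk_out (s := permSetoid R B j) d
      exact ⟨(⟦d⟧, σ), Subtype.ext hσ⟩
  refine (Nat.card_eq_of_bijective _ hF).symm.trans ?_
  rw [Nat.card_prod, Norb]
  congr 1
  rw [Nat.card_eq_fintype_card, Fintype.card_perm, Fintype.card_fin]

private lemma norb_eq_zero {j : ℕ} (h : Fintype.card V < j) : Norb R B j = 0 := by
  have hE : IsEmpty (SurjCol R B j) := by
    refine ⟨fun c => absurd (Fintype.card_le_of_surjective c.1 c.2.2) ?_⟩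
    simp only [Fintype.card_fin, not_le]
    exact h
  have : IsEmpty (Quotient (permSetoid R B j)) := ⟨fun t => hE.false t.out⟩
  exact Nat.card_of_isEmpty

set_option linter.unusedSectionVars false in
private lemma mixed_of_injective {k : ℕ} (hRB : Disjoint R B) {c : V → Fin k}
    (hc : Function.Injective c) : IsMixedColouring R B ⊥ c := by
  constructor
  · exact fun u v huv h => huv.ne (hc h)
  · intro u x v y hr hb huv hxy
    cases hc huv
    cases hc hxy
    have hadj : (R ⊓ B).Adj u x := ⟨hr, hb⟩
    rw [disjoint_iff.mp hRB] at hadj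
    simp at hadj

private lemma norb_card (hRB : Disjoint R B) : Norb R B (Fintype.card V) = 1 := by
  rw [Norb, Nat.card_eq_one_iff_unique]
  constructor
  · constructor
    intro a b
    refine Quotient.inductionOn₂ a b fun c c' => Quotient.sound ?_
    have hc : Function.Bijective c.1 :=
      (Fintype.bijective_iff_surjective_and_card c.1).mpr ⟨c.2.2, by simp⟩
    have hc' : Function.Bijective c'.1 :=
      (Fintype.bijective_iff_surjective_and_card c'.1).mpr ⟨c'.2.2, by simp⟩
    refine ⟨(Equiv.ofBijective _ hc).symm.trans (Equiv.ofBijective _ hc'), ?_⟩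
    funext v
    simp only [Equiv.coe_trans, Function.comp_apply]
    have : (Equiv.ofBijective _ hc).symm (c.1 v) = v := (Equiv.ofBijective _ hc).symm_apply_apply v
    rw [this]
    rfl
  · have e := Fintype.equivFin V
    exact ⟨⟦⟨⇑e, mixed_of_injective R B hRB e.injective, e.surjective⟩⟧⟩

private lemma nat_card_sigma {ι : Type*} [Fintype ι] (f : ι → Type*) [∀ i, Finite (f i)] :
    Nat.card ((i : ι) × f i) = ∑ i, Nat.card (f i) := by
  letI : ∀ i, Fintype (f i) := fun i => Fintype.ofFinite _
  rw [Nat.card_eq_fintype_card, Fintype.card_sigma]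
  exact Finset.sum_congr rfl fun i _ => (Nat.card_eq_fintype_card).symm

private lemma card_fiber {k : ℕ} (T : Finset (Fin k)) :
    Nat.card {c : {c : V → Fin k // IsMixedColouring R B ⊥ c} //
      Finset.image c.1 Finset.univ = T} = Nat.card (SurjCol R B T.card) := by
  classical
  have hinj : Function.Injective (Subtype.val ∘ ⇑T.equivFin.symm : Fin T.card → Fin k) :=
    Subtype.coe_injective.comp T.equivFin.symm.injective
  have himg : ∀ d : SurjCol R B T.card,
      Finset.image ((Subtype.val ∘ ⇑T.equivFin.symm) ∘ d.1) Finset.univ = T := by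
    intro d
    ext t
    simp only [Finset.mem_image, Finset.mem_univ, true_and, Function.comp_apply]
    constructor
    · rintro ⟨v, rfl⟩
      exact (T.equivFin.symm (d.1 v)).2
    · intro ht
      obtain ⟨v, hv⟩ := d.2.2 (T.equivFin ⟨t, ht⟩)
      exact ⟨v, by rw [hv, Equiv.symm_apply_apply]⟩
  refine (Nat.card_eq_of_bijective (fun d =>
    ⟨⟨(Subtype.val ∘ ⇑T.equivFin.symm) ∘ d.1, (mixed_comp R B hinj d.1).mpr d.2.1⟩,
      himg d⟩) ⟨?_, ?_⟩).symm
  · intro d d' h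
    have h1 : (Subtype.val ∘ ⇑T.equivFin.symm) ∘ d.1
        = (Subtype.val ∘ ⇑T.equivFin.symm) ∘ d'.1 := congrArg (fun x => x.1.1) h
    exact Subtype.ext (funext fun v => hinj (congrFun h1 v))
  · intro c
    have hmem : ∀ v, c.1.1 v ∈ T := by
      intro v
      have := Finset.mem_image_of_mem c.1.1 (Finset.mem_univ v)
      rwa [c.2] at this
    set d0 : V → Fin T.card := fun v => T.equivFin ⟨c.1.1 v, hmem v⟩ with hd0def
    have hd0 : (Subtype.val ∘ ⇑T.equivFin.symm) ∘ d0 = c.1.1 := by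
      funext v
      simp [hd0def]
    have hval : IsMixedColouring R B ⊥ d0 :=
      (mixed_comp R B hinj d0).mp (by rw [hd0]; exact c.1.2)
    have hsurj : Function.Surjective d0 := by
      intro y
      have hy : ((T.equivFin.symm y : T) : Fin k) ∈ Finset.image c.1.1 Finset.univ := by
        rw [c.2]
        exact (T.equivFin.symm y).2
      obtain ⟨v, _, hv⟩ := Finset.mem_image.mp hy
      refine ⟨v, ?_⟩
      show T.equivFin ⟨c.1.1 v, hmem v⟩ = y
      have : (⟨c.1.1 v, hmem v⟩ : T) = T.equivFin.symm y := Subtype.ext hv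
      rw [this, Equiv.apply_symm_apply]
    exact ⟨⟨d0, hval, hsurj⟩, Subtype.ext (Subtype.ext hd0)⟩

private lemma numColourings_eq (k : ℕ) :
    numColourings R B ⊥ k = ∑ j ∈ Finset.range (Fintype.card V + 1),
      Nat.descFactorial k j * Norb R B j := by
  classical
  have h1 : numColourings R B ⊥ k
      = ∑ T : Finset (Fin k), Nat.card (SurjCol R B T.card) := by
    rw [numColourings,
      Nat.card_congr (Equiv.sigmaFiberEquiv
        (fun c : {c : V → Fin k // IsMixedColouring R B ⊥ c} =>
          Finset.image c.1 Finset.univ)).symm,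
      nat_card_sigma]
    exact Finset.sum_congr rfl fun T _ => card_fiber R B T
  rw [h1, ← Finset.powerset_univ,
    Finset.sum_powerset_apply_card (fun j => Nat.card (SurjCol R B j))]
  have hcu : (Finset.univ : Finset (Fin k)).card = k := by simp
  rw [hcu]
  have hterm : ∀ j, k.choose j • Nat.card (SurjCol R B j)
      = Nat.descFactorial k j * Norb R B j := by
    intro j
    rw [smul_eq_mul, card_surjCol, Nat.descFactorial_eq_factorial_mul_choose]
    ring
  simp_rw [hterm]
  have e1 : ∑ j ∈ Finset.range (k+1), Nat.descFactorial k j * Norb R B j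
      = ∑ j ∈ Finset.range (k + Fintype.card V + 2), Nat.descFactorial k j * Norb R B j :=
    Finset.sum_subset (Finset.range_subset_range.mpr (by omega)) (fun j _ hj => by
      simp only [Finset.mem_range, not_lt] at hj
      rw [Nat.descFactorial_eq_zero_iff_lt.mpr (by omega), zero_mul])
  have e2 : ∑ j ∈ Finset.range (Fintype.card V + 1), Nat.descFactorial k j * Norb R B j
      = ∑ j ∈ Finset.range (k + Fintype.card V + 2), Nat.descFactorial k j * Norb R B j :=
    Finset.sum_subset (Finset.range_subset_range.mpr (by omega)) (fun j _ hj => by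
      simp only [Finset.mem_range, not_lt] at hj
      rw [norb_eq_zero R B (by omega), mul_zero])
  rw [e1, e2]

private lemma norb_monic (hRB : Disjoint R B) :
    (∑ j ∈ Finset.range (Fintype.card V + 1),
      Polynomial.C ((Norb R B j : ℤ)) * descPochhammer ℤ j).Monic := by
  rw [Finset.sum_range_succ, norb_card R B hRB]
  simp only [Nat.cast_one, map_one, one_mul]
  refine Polynomial.Monic.add_of_right (monic_descPochhammer ℤ _) ?_
  have hdeg : (descPochhammer ℤ (Fintype.card V)).degree = (Fintype.card V : WithBot ℕ) := by
    rw [Polynomial.degree_eq_natDegree (monic_descPochhammer ℤ _).ne_zero,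
      descPochhammer_natDegree]
  rw [hdeg]
  refine lt_of_le_of_lt (Polynomial.degree_sum_le _ _) ?_
  rw [Finset.sup_lt_iff (WithBot.bot_lt_coe _)]
  intro j hj
  have hdegj : (descPochhammer ℤ j).degree = (j : WithBot ℕ) := by
    rw [Polynomial.degree_eq_natDegree (monic_descPochhammer ℤ _).ne_zero,
      descPochhammer_natDegree]
  calc (Polynomial.C ((Norb R B j : ℤ)) * descPochhammer ℤ j).degree
      ≤ (Polynomial.C ((Norb R B j : ℤ))).degree + (descPochhammer ℤ j).degree :=
        Polynomial.degree_mul_le _ _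
    _ ≤ 0 + (j : WithBot ℕ) := add_le_add Polynomial.degree_C_le (le_of_eq hdegj)
    _ = (j : WithBot ℕ) := zero_add _
    _ < (Fintype.card V : WithBot ℕ) :=
        WithBot.coe_lt_coe.mpr (Finset.mem_range.mp hj)

end ChromAux


/-- Every rational root of the chromatic polynomial of a 2-edge-coloured graph is an
integer. -/
theorem rational_root_isInt
    {V : Type*} [Fintype V] [Nonempty V] (R B : SimpleGraph V) (hRB : Disjoint R B)
    (P : Polynomial ℚ) (hP : ∀ k : ℕ, P.eval (k : ℚ) = numColourings R B ⊥ k)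
    (q : ℚ) (hq : P.eval q = 0) : ∃ m : ℤ, q = (m : ℚ) := by
  classical
  set Q : Polynomial ℤ := ∑ j ∈ Finset.range (Fintype.card V + 1),
    Polynomial.C ((Norb R B j : ℤ)) * descPochhammer ℤ j with hQ
  have hQmonic : Q.Monic := norb_monic R B hRB
  have hQeval : ∀ k : ℕ, Q.eval ((k : ℤ)) = (numColourings R B ⊥ k : ℤ) := by
    intro k
    rw [numColourings_eq R B k, hQ, Polynomial.eval_finset_sum]
    push_cast
    refine Finset.sum_congr rfl fun j _ => ?_
    rw [Polynomial.eval_mul, Polynomial.eval_C, descPochhammer_eval_eq_descFactorial]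
    push_cast
    ring
  have hPQ : P = Q.map (Int.castRingHom ℚ) := by
    apply Polynomial.eq_of_infinite_eval_eq
    refine Set.Infinite.mono ?_ (Set.infinite_range_of_injective
      (Nat.cast_injective : Function.Injective ((↑) : ℕ → ℚ)))
    rintro x ⟨k, rfl⟩
    show P.eval (k : ℚ) = (Q.map (Int.castRingHom ℚ)).eval (k : ℚ)
    have h1 : ((k : ℚ)) = (Int.castRingHom ℚ) ((k : ℤ)) := by simp
    rw [hP k, h1, Polynomial.eval_map, Polynomial.eval₂_at_apply, hQeval k]
    simp
  have hint : IsIntegral ℤ q := by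
    refine ⟨Q, hQmonic, ?_⟩
    rw [algebraMap_int_eq, ← Polynomial.eval_map, ← hPQ]
    exact hq
  obtain ⟨m, hm⟩ := IsIntegrallyClosed.isIntegral_iff.mp hint
  exact ⟨m, by rw [← hm, algebraMap_int_eq, eq_intCast]⟩
end

section
/- Let G be a 2-edge-coloured graph and let K be any 2-edge-coloured complete graph on n ≥ 1 vertices, vertex-disjoint from G. Let H be the 2-edge-coloured graph on the disjoint union of the vertex sets of G and K containing all edges of G and of K with their original colours, together with all pairs {u, x} with u a vertex of G and x a vertex of K, each such joining pair being a red edge of H. Then for every natural number k ≥ n, the number of k-colourings of H equals k(k−1)(k−2)⋯(k−n+1) times the number of (k−n)-colourings of G. -/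
open SimpleGraph Polynomial

section AuxJoin

variable {V W : Type*}

@[simp] lemma disjUnion_adj_inl_inl {G : SimpleGraph V} {H : SimpleGraph W} {a b : V} :
    (disjUnion G H).Adj (Sum.inl a) (Sum.inl b) ↔ G.Adj a b := Iff.rfl

@[simp] lemma disjUnion_adj_inr_inr {G : SimpleGraph V} {H : SimpleGraph W} {a b : W} :
    (disjUnion G H).Adj (Sum.inr a) (Sum.inr b) ↔ H.Adj a b := Iff.rfl

@[simp] lemma disjUnion_adj_inl_inr {G : SimpleGraph V} {H : SimpleGraph W} {a : V} {b : W} :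
    ¬ (disjUnion G H).Adj (Sum.inl a) (Sum.inr b) := fun h => h

@[simp] lemma disjUnion_adj_inr_inl {G : SimpleGraph V} {H : SimpleGraph W} {a : W} {b : V} :
    ¬ (disjUnion G H).Adj (Sum.inr a) (Sum.inl b) := fun h => h

@[simp] lemma cross_adj_inl_inl {a b : V} :
    ¬ (crossGraph V W).Adj (Sum.inl a) (Sum.inl b) := fun h => h

@[simp] lemma cross_adj_inr_inr {a b : W} :
    ¬ (crossGraph V W).Adj (Sum.inr a) (Sum.inr b) := fun h => h

@[simp] lemma cross_adj_inl_inr {a : V} {b : W} :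
    (crossGraph V W).Adj (Sum.inl a) (Sum.inr b) := trivial

@[simp] lemma cross_adj_inr_inl {a : W} {b : V} :
    (crossGraph V W).Adj (Sum.inr a) (Sum.inl b) := trivial

lemma join_mixed_iff (R B : SimpleGraph V) (RK BK : SimpleGraph W)
    (hK : Disjoint RK BK) (hKtop : RK ⊔ BK = ⊤) {k : ℕ} (c : V ⊕ W → Fin k) :
    IsMixedColouring (disjUnion R RK ⊔ crossGraph V W) (disjUnion B BK) ⊥ c ↔
      IsMixedColouring R B ⊥ (c ∘ Sum.inl) ∧ Function.Injective (c ∘ Sum.inr) ∧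
        ∀ v w, c (Sum.inl v) ≠ c (Sum.inr w) := by
  have hdisj : ∀ a b : W, RK.Adj a b → BK.Adj a b → False := by
    intro a b h1 h2
    have h : (RK ⊓ BK).Adj a b := ⟨h1, h2⟩
    rw [disjoint_iff.mp hK] at h
    exact h
  constructor
  · rintro ⟨h1, h2⟩
    refine ⟨⟨fun u v huv => ?_, fun u x v y hr hb => ?_⟩, fun w w' hww => ?_, fun v w => ?_⟩
    · apply h1 (Sum.inl u) (Sum.inl v)
      simp only [SimpleGraph.sup_adj, SimpleGraph.bot_adj, or_false] at huv ⊢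
      simp only [disjUnion_adj_inl_inl]
      rcases huv with h | h
      · exact Or.inl (Or.inl h)
      · exact Or.inr h
    · exact h2 (Sum.inl u) (Sum.inl x) (Sum.inl v) (Sum.inl y)
        (by simp [hr]) (by simp [hb])
    · by_contra hne
      have hadj : (⊤ : SimpleGraph W).Adj w w' := by
        simpa using hne
      rw [← hKtop] at hadj
      refine h1 (Sum.inr w) (Sum.inr w') ?_ hww
      rcases hadj with h | h
      · exact Or.inl (Or.inl (by simp [h]))
      · exact Or.inl (Or.inr (by simp [h]))
    · apply h1 (Sum.inl v) (Sum.inr w)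
      simp
  · rintro ⟨⟨hp, hm⟩, hinj, hcr⟩
    constructor
    · rintro (u | u) (v | v) hadj
      · apply hp u v
        simp only [SimpleGraph.sup_adj, SimpleGraph.bot_adj, or_false,
          disjUnion_adj_inl_inl] at hadj ⊢
        rcases hadj with (h | h) | h
        · exact Or.inl h
        · exact absurd h cross_adj_inl_inl
        · exact Or.inr h
      · exact hcr u v
      · exact fun h => hcr v u h.symm
      · intro hcc
        have huv : u = v := hinj hcc
        subst huv
        simp only [SimpleGraph.sup_adj, SimpleGraph.bot_adj, or_false,
          disjUnion_adj_inr_inr] at hadj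
        rcases hadj with (h | h) | h
        · exact h.ne rfl
        · exact cross_adj_inr_inr h
        · exact h.ne rfl
    · rintro (u | u) (x | x) (v | v) (y | y) hr hb hcc
      all_goals simp only [SimpleGraph.sup_adj, disjUnion_adj_inl_inl,
        disjUnion_adj_inr_inr] at hr hb
      -- clean up impossible blue edges and red edges
      all_goals first
        | (exact absurd hb (by simp))
        | skip
      all_goals first
        | (exact absurd hcc (hcr _ _))
        | (exact absurd hcc.symm (hcr _ _))
        | skip
      -- remaining: (u x v y) with p,q on the same side as u
      · -- all in V
        rcases hr with hr | hr
        · exact hm u x v y hr (by simpa using hb) hcc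
        · exact absurd hr cross_adj_inl_inl
      · -- u inl, x inr, v inl, y inl : goal c (inr x) ≠ c (inl y)
        exact fun h => hcr y x h.symm
      · -- u inr, x inl, v inr, y inr
        exact hcr x y
      · -- all in W
        rcases hr with hr | hr
        · have huv : u = v := hinj hcc
          subst huv
          intro h
          have hxy : x = y := hinj h
          subst hxy
          exact hdisj u x hr (by simpa using hb)
        · exact absurd hr cross_adj_inr_inr

end AuxJoin
/-- Joining a 2-edge-coloured graph `G` to a 2-edge-coloured complete graph on `n`
vertices with all joining edges red: for `k ≥ n`, the number of `k`-colourings of the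
join is `k(k-1)⋯(k-n+1)` times the number of `(k-n)`-colourings of `G`. -/
theorem numColourings_join_redComplete
    {V W : Type*} [Fintype V] [Fintype W]
    (R B : SimpleGraph V) (hRB : Disjoint R B)
    (RK BK : SimpleGraph W) (hK : Disjoint RK BK) (hKtop : RK ⊔ BK = ⊤)
    (n : ℕ) (hW : Fintype.card W = n) (hn : 1 ≤ n) :
    ∀ k : ℕ, n ≤ k →
      numColourings (disjUnion R RK ⊔ crossGraph V W) (disjUnion B BK) ⊥ k =
        (∏ i ∈ Finset.range n, (k - i)) * numColourings R B ⊥ (k - n) := by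
  intro k hk
  classical
  have hcompl : ∀ f : W ↪ Fin k, Fintype.card {x : Fin k // x ∉ Set.range ⇑f} = k - n := by
    intro f
    rw [Fintype.card_subtype_compl, Fintype.card_fin]
    congr 1
    rw [← hW]
    exact Set.card_range_of_injective f.injective
  let Φ : {c : V ⊕ W → Fin k //
      IsMixedColouring (disjUnion R RK ⊔ crossGraph V W) (disjUnion B BK) ⊥ c} →
      (W ↪ Fin k) := fun c =>
    ⟨c.1 ∘ Sum.inr, ((join_mixed_iff R B RK BK hK hKtop c.1).mp c.2).2.1⟩
  have fib : ∀ f : W ↪ Fin k,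
      {x : {c : V ⊕ W → Fin k //
          IsMixedColouring (disjUnion R RK ⊔ crossGraph V W) (disjUnion B BK) ⊥ c} //
        Φ x = f} ≃ {c : V → Fin (k - n) // IsMixedColouring R B ⊥ c} := by
    intro f
    set e : {x : Fin k // x ∉ Set.range ⇑f} ≃ Fin (k - n) :=
      Fintype.equivFinOfCardEq (hcompl f) with he
    have hfw : ∀ (x : {x : {c : V ⊕ W → Fin k //
        IsMixedColouring (disjUnion R RK ⊔ crossGraph V W) (disjUnion B BK) ⊥ c} //
        Φ x = f}) (w : W), x.1.1 (Sum.inr w) = f w := fun x w => DFunLike.congr_fun x.2 w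
    have hnm : ∀ (x : {x : {c : V ⊕ W → Fin k //
        IsMixedColouring (disjUnion R RK ⊔ crossGraph V W) (disjUnion B BK) ⊥ c} //
        Φ x = f}) (v : V), x.1.1 (Sum.inl v) ∉ Set.range ⇑f := by
      rintro x v ⟨w, hw⟩
      refine ((join_mixed_iff R B RK BK hK hKtop x.1.1).mp x.1.2).2.2 v w ?_
      rw [← hfw x w] at hw
      exact hw.symm
    let F : {x : {c : V ⊕ W → Fin k //
        IsMixedColouring (disjUnion R RK ⊔ crossGraph V W) (disjUnion B BK) ⊥ c} //
        Φ x = f} → {c : V → Fin (k - n) // IsMixedColouring R B ⊥ c} :=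
      fun x => ⟨fun v => e ⟨x.1.1 (Sum.inl v), hnm x v⟩, by
        obtain ⟨⟨hp, hm⟩, hinj, hcr⟩ := (join_mixed_iff R B RK BK hK hKtop x.1.1).mp x.1.2
        have hiff : ∀ u v : V,
            e ⟨x.1.1 (Sum.inl u), hnm x u⟩ = e ⟨x.1.1 (Sum.inl v), hnm x v⟩ →
            x.1.1 (Sum.inl u) = x.1.1 (Sum.inl v) := by
          intro u v h
          have := e.injective h
          exact congrArg Subtype.val this
        constructor
        · intro u v hadj h
          exact hp u v hadj (hiff u v h)
        · intro u a v b hr hb h hcontra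
          exact hm u a v b hr hb (hiff u v h) (hiff a b hcontra)⟩
    let G' : {c : V → Fin (k - n) // IsMixedColouring R B ⊥ c} →
        {x : {c : V ⊕ W → Fin k //
          IsMixedColouring (disjUnion R RK ⊔ crossGraph V W) (disjUnion B BK) ⊥ c} //
          Φ x = f} :=
      fun y => ⟨⟨Sum.elim (fun v => (e.symm (y.1 v)).1) ⇑f, by
        rw [join_mixed_iff R B RK BK hK hKtop]
        refine ⟨?_, ?_, ?_⟩
        · have hiff : ∀ u v : V, (e.symm (y.1 u)).1 = (e.symm (y.1 v)).1 → y.1 u = y.1 v := by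
            intro u v h
            exact e.symm.injective (Subtype.ext h)
          obtain ⟨hp, hm⟩ := y.2
          constructor
          · intro u v hadj h
            exact hp u v hadj (hiff u v h)
          · intro u a v b hr hb h hcontra
            exact hm u a v b hr hb (hiff u v h) (hiff a b hcontra)
        · exact f.injective
        · intro v w h
          exact (e.symm (y.1 v)).2 ⟨w, h.symm⟩⟩, by
        ext w
        rfl⟩
    refine ⟨F, G', ?_, ?_⟩
    · intro x
      refine Subtype.ext (Subtype.ext (funext ?_))
      rintro (v | w)
      · exact congrArg Subtype.val (e.symm_apply_apply ⟨x.1.1 (Sum.inl v), hnm x v⟩)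
      · exact (hfw x w).symm
    · intro y
      refine Subtype.ext (funext fun v => ?_)
      exact (congrArg e (Subtype.coe_eta _ _)).trans (e.apply_symm_apply _)
  have main : {c : V ⊕ W → Fin k //
      IsMixedColouring (disjUnion R RK ⊔ crossGraph V W) (disjUnion B BK) ⊥ c} ≃
      (W ↪ Fin k) × {c : V → Fin (k - n) // IsMixedColouring R B ⊥ c} :=
    ((Equiv.sigmaFiberEquiv Φ).symm.trans (Equiv.sigmaCongrRight fib)).trans
      (Equiv.sigmaEquivProd _ _)
  have hcard : numColourings (disjUnion R RK ⊔ crossGraph V W) (disjUnion B BK) ⊥ k =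
      Nat.card ((W ↪ Fin k) × {c : V → Fin (k - n) // IsMixedColouring R B ⊥ c}) :=
    Nat.card_congr main
  rw [hcard, Nat.card_prod]
  congr 1
  rw [Nat.card_eq_fintype_card, Fintype.card_embedding_eq, Fintype.card_fin, hW,
    Nat.descFactorial_eq_prod_range]
end
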